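/- arXiv:1807.07067 — 2 statements merged into one kernel-verified Lean document; each statement's English description precedes it below -/
import Mathlib

section
/- Let N_i = (G_i, c_i) and N_j = (G_j, c_j) be flow networks on disjoint vertex and edge sets, let e1 be an input edge of G_i and e2 an output edge of G_j with c_i(e1) = c_j(e2), and let N_k be the network obtained by splicing e1 and e2 into a single new internal edge e (vertex set V_i ∪ V_j; input edges (Ein_i \ {e1}) ∪ Ein_j; output edges Eout_i ∪ (Eout_j \ {e2}); internal edges E#_i ∪ E#_j ∪ {e}, where tail(e) = tail_{G_j}(e2), head(e) = head_{G_i}(e1), c(e) = c_i(e1), and all other heads, tails, and capacities are inherited). Then for all A1 ⊆ Ein_i \ {e1}, A2 ⊆ Ein_j, B1 ⊆ Eout_i, B2 ⊆ Eout_j \ {e2}, setting A = A1 ∪ A2 and B = B1 ∪ B2: maxFromTo_{N_k}(A, B) = maxFromTo_{N_i}(A1, B1) + maxFromTo_{N_j}(A2, B2) + min{ maxFromTo_{N_i}(A1 ∪ {e1}, B1) − maxFromTo_{N_i}(A1, B1), maxFromTo_{N_j}(A2, B2 ∪ {e2}) − maxFromTo_{N_j}(A2, B2) }. -/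
open Finset

set_option linter.unusedSectionVars false
set_option maxHeartbeats 1000000

section Decomp
variable {V E : Type} [Fintype V] [Fintype E] [DecidableEq V] [DecidableEq E]

lemma exists_cycle {V E : Type} [Fintype V] [DecidableEq V] [DecidableEq E]
    (t h : E → V) (S : Finset E) (e0 : E) (he0 : e0 ∈ S)
    (hstep : ∀ e ∈ S, ∃ e' ∈ S, t e' = h e) :
    ∃ C : Finset E, C.Nonempty ∧ C ⊆ S ∧
      (∀ w, (C.filter (fun e => h e = w)).card = (C.filter (fun e => t e = w)).card) ∧
      (∀ w, (C.filter (fun e => t e = w)).card ≤ 1) := by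
  classical
  have hstep' : ∀ e : {x // x ∈ S}, ∃ e' : {x // x ∈ S}, t e'.1 = h e.1 := by
    rintro ⟨e, he⟩
    obtain ⟨e', he', ht⟩ := hstep e he
    exact ⟨⟨e', he'⟩, ht⟩
  choose nxt hnxt using hstep'
  set seq : ℕ → {x // x ∈ S} := fun n => nxt^[n] ⟨e0, he0⟩ with hseq
  have hseq_succ : ∀ n, seq (n+1) = nxt (seq n) := by
    intro n; simp [hseq, Function.iterate_succ_apply']
  set v : ℕ → V := fun n => t (seq n).1 with hv
  have hvh : ∀ n, v (n+1) = h (seq n).1 := by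
    intro n; simp only [hv]; rw [hseq_succ]; exact hnxt _
  -- pigeonhole
  have hrep : ∃ i j, i < j ∧ v i = v j := by
    have hni : ¬ Function.Injective (fun n : Fin (Fintype.card V + 1) => v n.1) := by
      intro hinj
      have := Fintype.card_le_of_injective _ hinj
      simp at this
    rw [Function.not_injective_iff] at hni
    obtain ⟨a, b, hab, hne⟩ := hni
    rcases Nat.lt_or_ge a.1 b.1 with hlt | hge
    · exact ⟨a.1, b.1, hlt, hab⟩
    · have : b.1 < a.1 := by
        rcases Nat.eq_or_lt_of_le hge with he | hl
        · exact absurd (Fin.ext he.symm) hne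
        · exact hl
      exact ⟨b.1, a.1, this, hab.symm⟩
  have hP : ∃ k, 0 < k ∧ ∃ i, v i = v (i + k) := by
    obtain ⟨i, j, hij, hvij⟩ := hrep
    exact ⟨j - i, by omega, i, by rw [hvij]; congr 1; omega⟩
  set k := Nat.find hP with hk
  obtain ⟨hkpos, i, hvi⟩ := Nat.find_spec hP
  have hdist : ∀ a b, a < k → b < k → v (i + a) = v (i + b) → a = b := by
    intro a b ha hb hveq
    by_contra hne
    wlog hab : a < b generalizing a b
    · exact this b a hb ha hveq.symm (Ne.symm hne) (by omega)
    · have hmin := Nat.find_min hP (m := b - a) (by omega)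
      push_neg at hmin
      have h1 : 0 < b - a := by omega
      have h2 := hmin h1
      exact h2 (i + a) (by rw [hveq]; congr 1; omega)
  set c : ℕ → E := fun m => (seq (i + m)).1 with hc
  have hcinj : ∀ a ∈ Finset.range k, ∀ b ∈ Finset.range k, c a = c b → a = b := by
    intro a ha b hb hab
    simp only [Finset.mem_range] at ha hb
    exact hdist a b ha hb (by simp only [hv, hc] at hab ⊢; rw [hab])
  set C := (Finset.range k).image c with hC
  have hhc : ∀ m < k, h (c m) = v (i + ((m+1) % k)) := by
    intro m hm
    have h1 : h (c m) = v (i + m + 1) := (hvh (i + m)).symm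
    by_cases hm1 : m + 1 < k
    · rw [Nat.mod_eq_of_lt hm1, h1, Nat.add_assoc]
    · have hkk : m + 1 = k := by omega
      rw [hkk, Nat.mod_self, h1, Nat.add_zero, show i + m + 1 = i + k by omega]
      exact hvi.symm
  -- mod arithmetic helpers
  have hmod1 : ∀ m < k, ((m + 1) % k + k - 1) % k = m := by
    intro m hm
    by_cases hm1 : m + 1 < k
    · rw [Nat.mod_eq_of_lt hm1]
      have : m + 1 + k - 1 = m + k := by omega
      rw [this, Nat.add_mod_right]
      exact Nat.mod_eq_of_lt hm
    · have hkk : m + 1 = k := by omega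
      rw [hkk, Nat.mod_self]
      have : 0 + k - 1 = m := by omega
      rw [this]
      exact Nat.mod_eq_of_lt hm
  have hmod2 : ∀ m < k, ((m + k - 1) % k + 1) % k = m := by
    intro m hm
    by_cases hm0 : m = 0
    · subst hm0
      have h1 : (0 + k - 1) % k = k - 1 := by rw [Nat.zero_add]; exact Nat.mod_eq_of_lt (by omega)
      rw [h1]
      have : k - 1 + 1 = k := by omega
      rw [this, Nat.mod_self]
    · have h1 : (m + k - 1) % k = m - 1 := by
        have he : m + k - 1 = (m - 1) + k := by omega
        rw [he, Nat.add_mod_right]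
        exact Nat.mod_eq_of_lt (by omega)
      rw [h1]
      have : m - 1 + 1 = m := by omega
      rw [this]
      exact Nat.mod_eq_of_lt hm
  refine ⟨C, ⟨c 0, Finset.mem_image_of_mem c (Finset.mem_range.2 hkpos)⟩, ?_, ?_, ?_⟩
  · intro e he
    simp only [hC, Finset.mem_image] at he
    obtain ⟨m, _, rfl⟩ := he
    exact (seq (i + m)).2
  · intro w
    rw [hC, Finset.filter_image, Finset.filter_image,
      Finset.card_image_of_injOn (fun a ha b hb => hcinj a (Finset.mem_filter.1 ha).1 b (Finset.mem_filter.1 hb).1),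
      Finset.card_image_of_injOn (fun a ha b hb => hcinj a (Finset.mem_filter.1 ha).1 b (Finset.mem_filter.1 hb).1)]
    apply Finset.card_nbij' (i := fun m => (m + 1) % k) (j := fun m => (m + k - 1) % k)
    · intro m hm
      simp only [Finset.mem_coe, Finset.mem_filter, Finset.mem_range] at hm ⊢
      refine ⟨Nat.mod_lt _ hkpos, ?_⟩
      rw [← hm.2, hhc m hm.1]
    · intro m hm
      simp only [Finset.mem_coe, Finset.mem_filter, Finset.mem_range] at hm ⊢
      refine ⟨Nat.mod_lt _ hkpos, ?_⟩
      rw [← hm.2, hhc ((m + k - 1) % k) (Nat.mod_lt _ hkpos), hmod2 m hm.1]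
    · intro m hm
      simp only [Finset.mem_coe, Finset.mem_filter, Finset.mem_range] at hm
      exact hmod1 m hm.1
    · intro m hm
      simp only [Finset.mem_coe, Finset.mem_filter, Finset.mem_range] at hm
      exact hmod2 m hm.1
  · intro w
    rw [Finset.card_le_one]
    intro a ha b hb
    simp only [hC, Finset.mem_filter, Finset.mem_image] at ha hb
    obtain ⟨⟨ma, hma, rfl⟩, hta⟩ := ha
    obtain ⟨⟨mb, hmb, rfl⟩, htb⟩ := hb
    simp only [Finset.mem_range] at hma hmb
    rw [hdist ma mb hma hmb (by simp only [hv, hc] at hta htb ⊢; rw [hta, htb])]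

lemma global_cons (Ein Eout Eint : Finset E) (t h : E → V) (f : E → ℝ)
    (hii : Disjoint Ein Eint) (hoi : Disjoint Eout Eint)
    (hcons : ∀ v, ∑ e ∈ (Ein ∪ Eint).filter (fun e => h e = v), f e
               = ∑ e ∈ (Eout ∪ Eint).filter (fun e => t e = v), f e) :
    ∑ e ∈ Ein, f e = ∑ e ∈ Eout, f e := by
  have h1 : ∑ v : V, ∑ e ∈ (Ein ∪ Eint).filter (fun e => h e = v), f e
      = ∑ e ∈ Ein ∪ Eint, f e :=
    Finset.sum_fiberwise_of_maps_to (fun e _ => Finset.mem_univ _) f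
  have h2 : ∑ v : V, ∑ e ∈ (Eout ∪ Eint).filter (fun e => t e = v), f e
      = ∑ e ∈ Eout ∪ Eint, f e :=
    Finset.sum_fiberwise_of_maps_to (fun e _ => Finset.mem_univ _) f
  have h3 : ∑ e ∈ Ein ∪ Eint, f e = ∑ e ∈ Eout ∪ Eint, f e := by
    rw [← h1, ← h2]; exact Finset.sum_congr rfl (fun v _ => hcons v)
  rw [Finset.sum_union hii, Finset.sum_union hoi] at h3
  linarith

end Decomp

section Decomp2
variable {V E : Type} [Fintype V] [Fintype E] [DecidableEq V] [DecidableEq E]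
lemma decomp (Ein Eout Eint : Finset E) (t h : E → V)
    (hio : Disjoint Ein Eout) (hii : Disjoint Ein Eint) (hoi : Disjoint Eout Eint)
    (hcover : Ein ∪ Eout ∪ Eint = Finset.univ)
    (f : E → ℝ) (hf0 : ∀ e, 0 ≤ f e)
    (hcons : ∀ v, ∑ e ∈ (Ein ∪ Eint).filter (fun e => h e = v), f e
               = ∑ e ∈ (Eout ∪ Eint).filter (fun e => t e = v), f e) :
    ∃ (n : ℕ) (δ : Fin n → ℝ) (p : Fin n → E → ℝ),
      (∀ i, 0 < δ i) ∧ (∀ i e, p i e = 0 ∨ p i e = 1) ∧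
      (∀ i v, ∑ e ∈ (Ein ∪ Eint).filter (fun e => h e = v), p i e
            = ∑ e ∈ (Eout ∪ Eint).filter (fun e => t e = v), p i e) ∧
      (∀ e, f e = ∑ i, δ i * p i e) ∧
      (∀ i, ∑ e ∈ Ein, p i e ≤ 1) ∧ (∀ i, ∑ e ∈ Eout, p i e ≤ 1) ∧
      (∀ i, ∑ e ∈ Ein, p i e = ∑ e ∈ Eout, p i e) := by
  classical
  -- augmented digraph on `Option V`
  set t' : E → Option V := fun e => if e ∈ Ein then none else some (t e) with ht'
  set h' : E → Option V := fun e => if e ∈ Eout then none else some (h e) with hh'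
  have hmemh : ∀ e v, h' e = some v ↔ e ∈ Ein ∪ Eint ∧ h e = v := by
    intro e v
    by_cases he : e ∈ Eout
    · simp only [hh', if_pos he]
      constructor
      · intro hc; exact absurd hc (by simp)
      · rintro ⟨h1, _⟩
        rcases Finset.mem_union.1 h1 with h2 | h2
        · exact absurd (hio.forall_ne_finset h2 he) (fun q => q rfl)
        · exact absurd (hoi.forall_ne_finset he h2) (fun q => q rfl)
    · simp only [hh', if_neg he, Option.some_inj]
      constructor
      · intro hc
        refine ⟨?_, hc⟩
        have : e ∈ Ein ∪ Eout ∪ Eint := hcover ▸ Finset.mem_univ e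
        rcases Finset.mem_union.1 this with h2 | h2
        · rcases Finset.mem_union.1 h2 with h3 | h3
          · exact Finset.mem_union_left _ h3
          · exact absurd h3 he
        · exact Finset.mem_union_right _ h2
      · rintro ⟨_, hc⟩; exact hc
  have hmemt : ∀ e v, t' e = some v ↔ e ∈ Eout ∪ Eint ∧ t e = v := by
    intro e v
    by_cases he : e ∈ Ein
    · simp only [ht', if_pos he]
      constructor
      · intro hc; exact absurd hc (by simp)
      · rintro ⟨h1, _⟩
        rcases Finset.mem_union.1 h1 with h2 | h2
        · exact absurd (hio.forall_ne_finset he h2) (fun q => q rfl)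
        · exact absurd (hii.forall_ne_finset he h2) (fun q => q rfl)
    · simp only [ht', if_neg he, Option.some_inj]
      constructor
      · intro hc
        refine ⟨?_, hc⟩
        have : e ∈ Ein ∪ Eout ∪ Eint := hcover ▸ Finset.mem_univ e
        rcases Finset.mem_union.1 this with h2 | h2
        · rcases Finset.mem_union.1 h2 with h3 | h3
          · exact absurd h3 he
          · exact Finset.mem_union_left _ h3
        · exact Finset.mem_union_right _ h2
      · rintro ⟨_, hc⟩; exact hc
  have hmemhn : ∀ e, h' e = none ↔ e ∈ Eout := by
    intro e; by_cases he : e ∈ Eout <;> simp [hh', he]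
  have hmemtn : ∀ e, t' e = none ↔ e ∈ Ein := by
    intro e; by_cases he : e ∈ Ein <;> simp [ht', he]
  -- fiber rewriting for arbitrary functions
  have fibh : ∀ (g : E → ℝ) (v : V),
      ∑ e ∈ Finset.univ.filter (fun e => h' e = some v), g e
      = ∑ e ∈ (Ein ∪ Eint).filter (fun e => h e = v), g e := by
    intro g v
    apply Finset.sum_congr _ (fun _ _ => rfl)
    ext e
    simp only [Finset.mem_filter, Finset.mem_univ, true_and, hmemh]
  have fibt : ∀ (g : E → ℝ) (v : V),
      ∑ e ∈ Finset.univ.filter (fun e => t' e = some v), g e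
      = ∑ e ∈ (Eout ∪ Eint).filter (fun e => t e = v), g e := by
    intro g v
    apply Finset.sum_congr _ (fun _ _ => rfl)
    ext e
    simp only [Finset.mem_filter, Finset.mem_univ, true_and, hmemt]
  have fibhn : ∀ (g : E → ℝ),
      ∑ e ∈ Finset.univ.filter (fun e => h' e = none), g e = ∑ e ∈ Eout, g e := by
    intro g
    apply Finset.sum_congr _ (fun _ _ => rfl)
    ext e
    simp only [Finset.mem_filter, Finset.mem_univ, true_and, hmemhn]
  have fibtn : ∀ (g : E → ℝ),
      ∑ e ∈ Finset.univ.filter (fun e => t' e = none), g e = ∑ e ∈ Ein, g e := by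
    intro g
    apply Finset.sum_congr _ (fun _ _ => rfl)
    ext e
    simp only [Finset.mem_filter, Finset.mem_univ, true_and, hmemtn]
  -- strong induction on support size
  suffices H : ∀ (N : ℕ) (f : E → ℝ), (Finset.univ.filter (fun e => f e ≠ 0)).card ≤ N →
      (∀ e, 0 ≤ f e) →
      (∀ v, ∑ e ∈ (Ein ∪ Eint).filter (fun e => h e = v), f e
          = ∑ e ∈ (Eout ∪ Eint).filter (fun e => t e = v), f e) →
      ∃ (n : ℕ) (δ : Fin n → ℝ) (p : Fin n → E → ℝ),
      (∀ i, 0 < δ i) ∧ (∀ i e, p i e = 0 ∨ p i e = 1) ∧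
      (∀ i v, ∑ e ∈ (Ein ∪ Eint).filter (fun e => h e = v), p i e
            = ∑ e ∈ (Eout ∪ Eint).filter (fun e => t e = v), p i e) ∧
      (∀ e, f e = ∑ i, δ i * p i e) ∧
      (∀ i, ∑ e ∈ Ein, p i e ≤ 1) ∧ (∀ i, ∑ e ∈ Eout, p i e ≤ 1) ∧
      (∀ i, ∑ e ∈ Ein, p i e = ∑ e ∈ Eout, p i e) by
    exact H _ f le_rfl hf0 hcons
  intro N
  induction N with
  | zero =>
    intro f hcard hf0 hcons
    have hz : ∀ e, f e = 0 := by
      intro e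
      by_contra hne
      have : e ∈ Finset.univ.filter (fun e => f e ≠ 0) := by simp [hne]
      have := Finset.card_pos.2 ⟨e, this⟩
      omega
    exact ⟨0, Fin.elim0, Fin.elim0, (fun i => i.elim0), (fun i => i.elim0),
      (fun i => i.elim0), (fun e => by simp [hz e]), (fun i => i.elim0),
      (fun i => i.elim0), (fun i => i.elim0)⟩
  | succ N ih =>
    intro f hcard hf0 hcons
    by_cases hz : ∀ e, f e = 0
    · exact ⟨0, Fin.elim0, Fin.elim0, (fun i => i.elim0), (fun i => i.elim0),
        (fun i => i.elim0), (fun e => by simp [hz e]), (fun i => i.elim0),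
        (fun i => i.elim0), (fun i => i.elim0)⟩
    push_neg at hz
    obtain ⟨e0, he0⟩ := hz
    set S := Finset.univ.filter (fun e => f e ≠ 0) with hS
    have he0S : e0 ∈ S := by simp [hS, he0]
    have hSpos : ∀ e ∈ S, 0 < f e := by
      intro e he
      simp only [hS, Finset.mem_filter] at he
      exact lt_of_le_of_ne (hf0 e) (Ne.symm he.2)
    -- augmented conservation
    have hcons' : ∀ w : Option V,
        ∑ e ∈ Finset.univ.filter (fun e => h' e = w), f e
        = ∑ e ∈ Finset.univ.filter (fun e => t' e = w), f e := by
      intro w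
      cases w with
      | none =>
        rw [fibhn, fibtn]
        exact (global_cons Ein Eout Eint t h f hii hoi hcons).symm
      | some v => rw [fibh, fibt]; exact hcons v
    -- step function
    have hstep : ∀ e ∈ S, ∃ e' ∈ S, t' e' = h' e := by
      intro e he
      have hpos : 0 < ∑ e' ∈ Finset.univ.filter (fun e' => t' e' = h' e), f e' := by
        rw [← hcons' (h' e)]
        refine lt_of_lt_of_le (hSpos e he) (Finset.single_le_sum (fun e' _ => hf0 e') ?_)
        simp
      by_contra hc
      push_neg at hc
      have : ∑ e' ∈ Finset.univ.filter (fun e' => t' e' = h' e), f e' = 0 := by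
        apply Finset.sum_eq_zero
        intro e' he'
        simp only [Finset.mem_filter, Finset.mem_univ, true_and] at he'
        by_contra hfe
        exact absurd he' (hc e' (by simp [hS, hfe]))
      rw [this] at hpos
      exact lt_irrefl _ hpos
    obtain ⟨C, hCne, hCS, hCbal, hCone⟩ := exists_cycle t' h' S e0 he0S hstep
    set p : E → ℝ := fun e => if e ∈ C then 1 else 0 with hp
    have hpsum : ∀ s : Finset E, ∑ e ∈ s, p e = ((s.filter (fun e => e ∈ C)).card : ℝ) := by
      intro s
      rw [hp]
      exact Finset.sum_boole (R := ℝ) (fun e => e ∈ C) s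
    have hpcard : ∀ s : Finset E, (s.filter (fun e => e ∈ C)).card
        = (C.filter (fun e => e ∈ s)).card := by
      intro s; congr 1; ext e; simp only [Finset.mem_filter]; tauto
    -- p's conservation (original format)
    have hpcons : ∀ v, ∑ e ∈ (Ein ∪ Eint).filter (fun e => h e = v), p e
        = ∑ e ∈ (Eout ∪ Eint).filter (fun e => t e = v), p e := by
      intro v
      rw [← fibh, ← fibt, hpsum, hpsum, hpcard, hpcard]
      have e1 : (C.filter (fun e => e ∈ Finset.univ.filter (fun e => h' e = some v)))
          = C.filter (fun e => h' e = some v) := by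
        congr 1; ext e; simp
      have e2 : (C.filter (fun e => e ∈ Finset.univ.filter (fun e => t' e = some v)))
          = C.filter (fun e => t' e = some v) := by
        congr 1; ext e; simp
      rw [e1, e2]
      exact_mod_cast congrArg Nat.cast (hCbal (some v))
    -- δ
    obtain ⟨em, hem, hmin⟩ := Finset.exists_min_image C f hCne
    set δ := f em with hδ
    have hδpos : 0 < δ := hSpos em (hCS hem)
    set f' : E → ℝ := fun e => f e - δ * p e with hf'
    have hf'0 : ∀ e, 0 ≤ f' e := by
      intro e
      by_cases he : e ∈ C
      · simp only [hf', hp, if_pos he]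
        have := hmin e he
        linarith
      · simp only [hf', hp, if_neg he]
        have := hf0 e
        linarith
    have hf'em : f' em = 0 := by simp [hf', hp, hem, hδ]
    have hf'supp : Finset.univ.filter (fun e => f' e ≠ 0) ⊆ S.erase em := by
      intro e he
      simp only [Finset.mem_filter, Finset.mem_univ, true_and] at he
      refine Finset.mem_erase.2 ⟨?_, ?_⟩
      · intro hc; subst hc; exact he hf'em
      · simp only [hS, Finset.mem_filter, Finset.mem_univ, true_and]
        intro hc
        apply he
        have heC : e ∉ C := fun h => (hSpos e (hCS h)).ne' hc
        simp [hf', hp, heC, hc]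
    have hcard' : (Finset.univ.filter (fun e => f' e ≠ 0)).card ≤ N := by
      have h1 := Finset.card_le_card hf'supp
      have h2 : (S.erase em).card < S.card := Finset.card_erase_lt_of_mem (hCS hem)
      omega
    have hcons'' : ∀ v, ∑ e ∈ (Ein ∪ Eint).filter (fun e => h e = v), f' e
        = ∑ e ∈ (Eout ∪ Eint).filter (fun e => t e = v), f' e := by
      intro v
      simp only [hf', Finset.sum_sub_distrib, ← Finset.mul_sum]
      rw [hcons v, hpcons v]
    obtain ⟨n, δs, ps, c1, c2, c3, c4, c5, c6, c7⟩ := ih f' hcard' hf'0 hcons''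
    refine ⟨n + 1, Fin.cons δ δs, Fin.cons p ps, ?_, ?_, ?_, ?_, ?_, ?_, ?_⟩
    · intro i
      refine Fin.cases ?_ ?_ i
      · exact hδpos
      · exact c1
    · intro i
      refine Fin.cases ?_ ?_ i
      · intro e; by_cases he : e ∈ C <;> simp [hp, he]
      · exact c2
    · intro i
      refine Fin.cases ?_ ?_ i
      · exact hpcons
      · exact c3
    · intro e
      rw [Fin.sum_univ_succ]
      have := c4 e
      simp only [hf'] at this
      simp only [Fin.cons_zero, Fin.cons_succ]
      linarith
    · intro i
      refine Fin.cases ?_ ?_ i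
      · simp only [Fin.cons_zero]
        rw [hpsum, hpcard]
        have heq : C.filter (fun e => e ∈ Ein) = C.filter (fun e => t' e = none) := by
          congr 1; ext e; exact (hmemtn e).symm
        rw [heq]
        exact_mod_cast Nat.cast_le.2 (hCone none)
      · exact c5
    · intro i
      refine Fin.cases ?_ ?_ i
      · simp only [Fin.cons_zero]
        rw [hpsum, hpcard]
        have heq : C.filter (fun e => e ∈ Eout) = C.filter (fun e => h' e = none) := by
          congr 1; ext e; exact (hmemhn e).symm
        rw [heq]
        calc ((C.filter (fun e => h' e = none)).card : ℝ)
            = ((C.filter (fun e => t' e = none)).card : ℝ) := by exact_mod_cast hCbal none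
          _ ≤ 1 := by exact_mod_cast Nat.cast_le.2 (hCone none)
      · exact c6
    · intro i
      refine Fin.cases ?_ ?_ i
      · simp only [Fin.cons_zero]
        rw [hpsum, hpsum, hpcard, hpcard]
        have heq1 : C.filter (fun e => e ∈ Ein) = C.filter (fun e => t' e = none) := by
          congr 1; ext e; exact (hmemtn e).symm
        have heq2 : C.filter (fun e => e ∈ Eout) = C.filter (fun e => h' e = none) := by
          congr 1; ext e; exact (hmemhn e).symm
        rw [heq1, heq2]
        exact_mod_cast (hCbal none).symm
      · exact c7

end Decomp2

section SumHelpers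
variable {E1 E2 : Type} [DecidableEq E1] [DecidableEq E2]

lemma disj_inl_inr (s : Finset E1) (t : Finset E2) :
    Disjoint (s.image (Sum.inl : E1 → E1 ⊕ E2)) (t.image (Sum.inr : E2 → E1 ⊕ E2)) := by
  rw [Finset.disjoint_left]
  rintro x hx hx'
  simp only [Finset.mem_image] at hx hx'
  obtain ⟨a, _, rfl⟩ := hx
  obtain ⟨b, _, hb⟩ := hx'
  exact nomatch hb

lemma sum_inl_inr (s : Finset E1) (t : Finset E2) (g : E1 ⊕ E2 → ℝ) :
    ∑ x ∈ s.image Sum.inl ∪ t.image Sum.inr, g x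
    = ∑ e ∈ s, g (Sum.inl e) + ∑ e ∈ t, g (Sum.inr e) := by
  rw [Finset.sum_union (disj_inl_inr s t),
    Finset.sum_image (fun a _ b _ h => Sum.inl_injective h),
    Finset.sum_image (fun a _ b _ h => Sum.inr_injective h)]

lemma sum_filter_inl_inr (s : Finset E1) (t : Finset E2) (P : E1 ⊕ E2 → Prop)
    [DecidablePred P] (g : E1 ⊕ E2 → ℝ) :
    ∑ x ∈ (s.image Sum.inl ∪ t.image Sum.inr).filter P, g x
    = ∑ e ∈ s.filter (fun e => P (Sum.inl e)), g (Sum.inl e)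
    + ∑ e ∈ t.filter (fun e => P (Sum.inr e)), g (Sum.inr e) := by
  rw [Finset.filter_union, Finset.filter_image, Finset.filter_image,
    Finset.sum_union (disj_inl_inr _ _),
    Finset.sum_image (fun a _ b _ h => Sum.inl_injective h),
    Finset.sum_image (fun a _ b _ h => Sum.inr_injective h)]

lemma mem_inl_union (s : Finset E1) (t : Finset E2) (e : E1) :
    Sum.inl e ∈ s.image (Sum.inl : E1 → E1 ⊕ E2) ∪ t.image Sum.inr ↔ e ∈ s := by
  simp only [Finset.mem_union, Finset.mem_image]
  constructor
  · rintro (⟨a, ha, hae⟩ | ⟨a, ha, hae⟩)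
    · cases Sum.inl_injective hae; exact ha
    · exact nomatch hae
  · exact fun h => Or.inl ⟨e, h, rfl⟩

lemma mem_inr_union (s : Finset E1) (t : Finset E2) (e : E2) :
    Sum.inr e ∈ s.image (Sum.inl : E1 → E1 ⊕ E2) ∪ t.image Sum.inr ↔ e ∈ t := by
  simp only [Finset.mem_union, Finset.mem_image]
  constructor
  · rintro (⟨a, ha, hae⟩ | ⟨a, ha, hae⟩)
    · exact nomatch hae
    · cases Sum.inr_injective hae; exact ha
  · exact fun h => Or.inr ⟨e, h, rfl⟩

end SumHelpers

/-- A flow network: a finite vertex set `V`, a finite edge set `E` partitioned into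
input edges `Ein`, output edges `Eout` and internal edges `Eint`; each internal edge
has two distinct endpoints `tail e` and `head e` (with at most one internal edge per
`(tail, head)` pair), each input edge has a head only, each output edge a tail only
(values of `tail`/`head` outside their intended domains are irrelevant junk); and a
nonnegative upper-bound capacity `cap`. -/
structure FlowNetwork (V E : Type) [Fintype V] [Fintype E]
    [DecidableEq V] [DecidableEq E] where
  Ein : Finset E
  Eout : Finset E
  Eint : Finset E
  disj_in_out : Disjoint Ein Eout
  disj_in_int : Disjoint Ein Eint
  disj_out_int : Disjoint Eout Eint
  tail : E → V
  head : E → V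
  no_self_loop : ∀ e ∈ Eint, tail e ≠ head e
  no_multi : ∀ e ∈ Eint, ∀ e' ∈ Eint, tail e = tail e' → head e = head e' → e = e'
  cap : E → ℝ
  cap_nonneg : ∀ e, 0 ≤ cap e

namespace FlowNetwork

variable {V E : Type} [Fintype V] [Fintype E] [DecidableEq V] [DecidableEq E]

/-- A flow `f : E → ℝ≥0` is feasible if it conserves flow at every vertex and
respects the capacity of every edge. -/
def Feasible (N : FlowNetwork V E) (f : E → ℝ) : Prop :=
  (∀ e, 0 ≤ f e) ∧ (∀ e, f e ≤ N.cap e) ∧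
  ∀ v : V,
    ∑ e ∈ (N.Ein ∪ N.Eint).filter (fun e => N.head e = v), f e =
    ∑ e ∈ (N.Eout ∪ N.Eint).filter (fun e => N.tail e = v), f e

/-- `maxFromTo N A B`: the supremum of `f(A)` over all feasible flows `f` that
vanish on `(Ein \ A) ∪ (Eout \ B)`. -/
noncomputable def maxFromTo (N : FlowNetwork V E) (A B : Finset E) : ℝ :=
  sSup {x : ℝ | ∃ f : E → ℝ, N.Feasible f ∧
    (∀ e ∈ (N.Ein \ A) ∪ (N.Eout \ B), f e = 0) ∧ x = ∑ e ∈ A, f e}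


-- basics
def Sup (N : FlowNetwork V E) (A B : Finset E) (f : E → ℝ) : Prop :=
  ∀ e ∈ (N.Ein \ A) ∪ (N.Eout \ B), f e = 0

def vSet (N : FlowNetwork V E) (A B : Finset E) : Set ℝ :=
  {x : ℝ | ∃ f : E → ℝ, N.Feasible f ∧ N.Sup A B f ∧ x = ∑ e ∈ A, f e}

lemma maxFromTo_eq_sSup (N : FlowNetwork V E) (A B : Finset E) :
    N.maxFromTo A B = sSup (N.vSet A B) := rfl

lemma zero_feasible (N : FlowNetwork V E) : N.Feasible (fun _ => 0) :=
  ⟨fun _ => le_refl _, fun e => N.cap_nonneg e, fun _ => by simp⟩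

lemma vSet_nonempty (N : FlowNetwork V E) (A B : Finset E) : (N.vSet A B).Nonempty :=
  ⟨0, fun _ => 0, N.zero_feasible, fun _ _ => rfl, by simp⟩

lemma vSet_bddAbove (N : FlowNetwork V E) (A B : Finset E) : BddAbove (N.vSet A B) := by
  refine ⟨∑ e ∈ A, N.cap e, ?_⟩
  rintro x ⟨f, hf, _, rfl⟩
  exact Finset.sum_le_sum (fun e _ => hf.2.1 e)

lemma le_maxFromTo (N : FlowNetwork V E) {A B : Finset E} {f : E → ℝ}
    (hf : N.Feasible f) (hs : N.Sup A B f) : ∑ e ∈ A, f e ≤ N.maxFromTo A B :=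
  le_csSup (N.vSet_bddAbove A B) ⟨f, hf, hs, rfl⟩

lemma maxFromTo_nonneg (N : FlowNetwork V E) (A B : Finset E) : 0 ≤ N.maxFromTo A B := by
  have := N.le_maxFromTo (A := A) (B := B) N.zero_feasible (fun _ _ => rfl)
  simpa using this

lemma maxFromTo_le (N : FlowNetwork V E) {A B : Finset E} {y : ℝ}
    (hy : ∀ f : E → ℝ, N.Feasible f → N.Sup A B f → ∑ e ∈ A, f e ≤ y) :
    N.maxFromTo A B ≤ y := by
  apply csSup_le (N.vSet_nonempty A B)
  rintro x ⟨f, hf, hs, rfl⟩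
  exact hy f hf hs

lemma exists_opt (N : FlowNetwork V E) (A B : Finset E) :
    ∃ f : E → ℝ, N.Feasible f ∧ N.Sup A B f ∧ ∑ e ∈ A, f e = N.maxFromTo A B := by
  classical
  set K : Set (E → ℝ) := {f | N.Feasible f ∧ N.Sup A B f} with hK
  have hKne : K.Nonempty := ⟨fun _ => 0, N.zero_feasible, fun _ _ => rfl⟩
  have hKclosed : IsClosed K := by
    have c1 : IsClosed {f : E → ℝ | ∀ e, 0 ≤ f e} := by
      have h : {f : E → ℝ | ∀ e, 0 ≤ f e} = ⋂ e, {f | 0 ≤ f e} := by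
        ext f; simp [Set.mem_iInter]
      rw [h]
      exact isClosed_iInter (fun e => isClosed_le continuous_const (continuous_apply e))
    have c2 : IsClosed {f : E → ℝ | ∀ e, f e ≤ N.cap e} := by
      have h : {f : E → ℝ | ∀ e, f e ≤ N.cap e} = ⋂ e, {f | f e ≤ N.cap e} := by
        ext f; simp [Set.mem_iInter]
      rw [h]
      exact isClosed_iInter (fun e => isClosed_le (continuous_apply e) continuous_const)
    have c3 : IsClosed {f : E → ℝ | ∀ v : V,
        ∑ e ∈ (N.Ein ∪ N.Eint).filter (fun e => N.head e = v), f e =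
        ∑ e ∈ (N.Eout ∪ N.Eint).filter (fun e => N.tail e = v), f e} := by
      have h : {f : E → ℝ | ∀ v : V,
          ∑ e ∈ (N.Ein ∪ N.Eint).filter (fun e => N.head e = v), f e =
          ∑ e ∈ (N.Eout ∪ N.Eint).filter (fun e => N.tail e = v), f e}
          = ⋂ v, {f | ∑ e ∈ (N.Ein ∪ N.Eint).filter (fun e => N.head e = v), f e =
            ∑ e ∈ (N.Eout ∪ N.Eint).filter (fun e => N.tail e = v), f e} := by
        ext f; simp [Set.mem_iInter]
      rw [h]
      refine isClosed_iInter (fun v => isClosed_eq ?_ ?_) <;>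
        exact continuous_finset_sum _ (fun e _ => continuous_apply e)
    have c4 : IsClosed {f : E → ℝ | N.Sup A B f} := by
      have h : {f : E → ℝ | N.Sup A B f}
          = ⋂ e ∈ ((N.Ein \ A) ∪ (N.Eout \ B) : Finset E), {f : E → ℝ | f e = 0} := by
        ext f; simp [Set.mem_iInter, Sup]
      rw [h]
      exact isClosed_biInter (fun e _ => isClosed_eq (continuous_apply e) continuous_const)
    have hKeq : K = ({f : E → ℝ | ∀ e, 0 ≤ f e} ∩ {f | ∀ e, f e ≤ N.cap e}
        ∩ {f | ∀ v : V,
        ∑ e ∈ (N.Ein ∪ N.Eint).filter (fun e => N.head e = v), f e =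
        ∑ e ∈ (N.Eout ∪ N.Eint).filter (fun e => N.tail e = v), f e})
        ∩ {f | N.Sup A B f} := by
      ext f
      simp only [hK, Set.mem_inter_iff, Set.mem_setOf_eq, Feasible]
      tauto
    rw [hKeq]
    exact (((c1.inter c2).inter c3).inter c4)
  have hKcompact : IsCompact K := by
    apply IsCompact.of_isClosed_subset (isCompact_Icc (a := (fun _ => 0 : E → ℝ)) (b := N.cap))
      hKclosed
    rintro f ⟨hfeas, _⟩
    exact ⟨fun e => hfeas.1 e, fun e => hfeas.2.1 e⟩
  have hcont : Continuous (fun f : E → ℝ => ∑ e ∈ A, f e) :=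
    continuous_finset_sum _ (fun e _ => continuous_apply e)
  obtain ⟨f, hfK, hmax⟩ := hKcompact.exists_isMaxOn hKne hcont.continuousOn
  refine ⟨f, hfK.1, hfK.2, ?_⟩
  rw [maxFromTo_eq_sSup]
  have hgr : IsGreatest (N.vSet A B) (∑ e ∈ A, f e) := by
    refine ⟨⟨f, hfK.1, hfK.2, rfl⟩, ?_⟩
    rintro x ⟨g, hg, hgs, rfl⟩
    exact hmax ⟨hg, hgs⟩
  exact hgr.csSup_eq.symm

lemma maxFromTo_mono (N : FlowNetwork V E) {A A' B B' : Finset E}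
    (hA : A ⊆ A') (hB : B ⊆ B') (hA' : A' ⊆ N.Ein) :
    N.maxFromTo A B ≤ N.maxFromTo A' B' := by
  apply csSup_le_csSup (N.vSet_bddAbove A' B') (N.vSet_nonempty A B)
  rintro x ⟨f, hf, hs, rfl⟩
  refine ⟨f, hf, ?_, ?_⟩
  · intro e he
    apply hs
    rcases Finset.mem_union.1 he with h1 | h1
    · exact Finset.mem_union_left _ (Finset.sdiff_subset_sdiff le_rfl hA h1)
    · exact Finset.mem_union_right _ (Finset.sdiff_subset_sdiff le_rfl hB h1)
  · rw [← Finset.sum_sdiff hA]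
    have hz : ∑ e ∈ A' \ A, f e = 0 := by
      apply Finset.sum_eq_zero
      intro e he
      apply hs
      apply Finset.mem_union_left
      rw [Finset.mem_sdiff] at he ⊢
      exact ⟨hA' he.1, he.2⟩
    rw [hz, zero_add]


lemma feasible_global (N : FlowNetwork V E) {f : E → ℝ} (hf : N.Feasible f) :
    ∑ e ∈ N.Ein, f e = ∑ e ∈ N.Eout, f e :=
  global_cons N.Ein N.Eout N.Eint N.tail N.head f N.disj_in_int N.disj_out_int hf.2.2

lemma sum_in_eq (N : FlowNetwork V E) {A B : Finset E} {f : E → ℝ}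
    (hs : N.Sup A B f) (hA : A ⊆ N.Ein) : ∑ e ∈ N.Ein, f e = ∑ e ∈ A, f e := by
  rw [← Finset.sum_sdiff hA]
  have hz : ∑ e ∈ N.Ein \ A, f e = 0 :=
    Finset.sum_eq_zero (fun e he => hs e (Finset.mem_union_left _ he))
  rw [hz, zero_add]

lemma sum_out_eq (N : FlowNetwork V E) {A B : Finset E} {f : E → ℝ}
    (hs : N.Sup A B f) (hB : B ⊆ N.Eout) : ∑ e ∈ N.Eout, f e = ∑ e ∈ B, f e := by
  rw [← Finset.sum_sdiff hB]
  have hz : ∑ e ∈ N.Eout \ B, f e = 0 :=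
    Finset.sum_eq_zero (fun e he => hs e (Finset.mem_union_right _ he))
  rw [hz, zero_add]

lemma value_in_out (N : FlowNetwork V E) {A B : Finset E} {f : E → ℝ}
    (hf : N.Feasible f) (hs : N.Sup A B f) (hA : A ⊆ N.Ein) (hB : B ⊆ N.Eout) :
    ∑ e ∈ A, f e = ∑ e ∈ B, f e := by
  rw [← N.sum_in_eq hs hA, ← N.sum_out_eq hs hB]
  exact N.feasible_global hf

lemma drop_input (N : FlowNetwork V E) (hcover : N.Ein ∪ N.Eout ∪ N.Eint = Finset.univ)
    {e1 : E} {A B : Finset E} (he1 : e1 ∈ N.Ein) (he1A : e1 ∉ A) (hA : A ⊆ N.Ein)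
    {f : E → ℝ} (hf : N.Feasible f) (hs : N.Sup (insert e1 A) B f) :
    ∑ e ∈ A, f e ≤ N.maxFromTo A B := by
  classical
  obtain ⟨n, δ, p, c1, c2, c3, c4, c5, c6, c7⟩ :=
    decomp N.Ein N.Eout N.Eint N.tail N.head N.disj_in_out N.disj_in_int N.disj_out_int
      hcover f hf.1 hf.2.2
  have hple : ∀ (i : Fin n) (e : E), 0 ≤ p i e := by
    intro i e; rcases c2 i e with h | h <;> simp [h]
  set T : Finset (Fin n) := Finset.univ.filter (fun i => p i e1 ≠ 0) with hT
  set g : E → ℝ := fun e => f e - ∑ i ∈ T, δ i * p i e with hg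
  have hsplit : ∀ e, f e = ∑ i ∈ T, δ i * p i e + ∑ i ∈ Tᶜ, δ i * p i e := by
    intro e; rw [c4 e, ← Finset.sum_add_sum_compl T]
  have hg_alt : ∀ e, g e = ∑ i ∈ Tᶜ, δ i * p i e := by
    intro e; rw [hg]; simp only; rw [hsplit e]; ring
  have hg0 : ∀ e, 0 ≤ g e := by
    intro e; rw [hg_alt]
    exact Finset.sum_nonneg (fun i _ => mul_nonneg (c1 i).le (hple i e))
  have hgle : ∀ e, g e ≤ f e := by
    intro e; rw [hg]; simp only
    have : 0 ≤ ∑ i ∈ T, δ i * p i e :=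
      Finset.sum_nonneg (fun i _ => mul_nonneg (c1 i).le (hple i e))
    linarith
  have hgfeas : N.Feasible g := by
    refine ⟨hg0, fun e => le_trans (hgle e) (hf.2.1 e), fun v => ?_⟩
    simp only [hg, Finset.sum_sub_distrib]
    rw [hf.2.2 v]
    congr 1
    have swap : ∀ (s : Finset E), ∑ e ∈ s, ∑ i ∈ T, δ i * p i e
        = ∑ i ∈ T, δ i * ∑ e ∈ s, p i e := by
      intro s
      rw [Finset.sum_comm]
      exact Finset.sum_congr rfl (fun i _ => (Finset.mul_sum _ _ _).symm)
    rw [swap, swap]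
    exact Finset.sum_congr rfl (fun i _ => by rw [c3 i v])
  have hTone : ∀ i ∈ T, p i e1 = 1 := by
    intro i hi
    rcases c2 i e1 with h | h
    · exact absurd h (by simpa [hT] using hi)
    · exact h
  have hge1 : g e1 = 0 := by
    rw [hg]
    simp only
    rw [hsplit e1, Finset.sum_eq_zero (s := Tᶜ) (fun i hi => by
      have : p i e1 = 0 := by
        by_contra hc
        exact (Finset.mem_compl.1 hi) (by simp [hT, hc])
      rw [this, mul_zero])]
    ring
  have hgsup : N.Sup A B g := by
    intro e he
    by_cases hee : e = e1
    · subst hee; exact hge1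
    · have : e ∈ (N.Ein \ insert e1 A) ∪ (N.Eout \ B) := by
        rcases Finset.mem_union.1 he with h1 | h1
        · refine Finset.mem_union_left _ ?_
          rw [Finset.mem_sdiff] at h1 ⊢
          exact ⟨h1.1, fun hc => h1.2 ((Finset.mem_insert.1 hc).resolve_left hee)⟩
        · exact Finset.mem_union_right _ h1
      have hz := hs e this
      have := hgle e
      have := hg0 e
      linarith
  -- value on A is unchanged
  have hTA : ∀ i ∈ T, ∑ a ∈ A, p i a = 0 := by
    intro i hi
    have hsub : insert e1 A ⊆ N.Ein := Finset.insert_subset he1 hA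
    have hle : ∑ e ∈ insert e1 A, p i e ≤ 1 :=
      le_trans (Finset.sum_le_sum_of_subset_of_nonneg hsub (fun e _ _ => hple i e)) (c5 i)
    rw [Finset.sum_insert he1A, hTone i hi] at hle
    have hge : 0 ≤ ∑ a ∈ A, p i a := Finset.sum_nonneg (fun a _ => hple i a)
    linarith
  have hvalA : ∑ e ∈ A, g e = ∑ e ∈ A, f e := by
    simp only [hg, Finset.sum_sub_distrib]
    have : ∑ e ∈ A, ∑ i ∈ T, δ i * p i e = 0 := by
      rw [Finset.sum_comm]
      apply Finset.sum_eq_zero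
      intro i hi
      rw [← Finset.mul_sum, hTA i hi, mul_zero]
    rw [this]; ring
  rw [← hvalA]
  exact N.le_maxFromTo hgfeas hgsup


lemma push_extra (N : FlowNetwork V E) (hcover : N.Ein ∪ N.Eout ∪ N.Eint = Finset.univ)
    {e1 : E} {A B : Finset E} (he1 : e1 ∈ N.Ein) (he1A : e1 ∉ A) (hA : A ⊆ N.Ein)
    (hB : B ⊆ N.Eout) :
    ∃ f : E → ℝ, N.Feasible f ∧ N.Sup (insert e1 A) B f ∧
      N.maxFromTo A B ≤ ∑ e ∈ A, f e ∧
      ∑ e ∈ insert e1 A, f e = N.maxFromTo (insert e1 A) B := by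
  classical
  obtain ⟨g0, hg0f, hg0s, hg0v⟩ := N.exists_opt A B
  obtain ⟨g1, hg1f, hg1s, hg1v⟩ := N.exists_opt (insert e1 A) B
  set dp : E → ℝ := fun e => max (g0 e - g1 e) 0 with hdp
  set dm : E → ℝ := fun e => max (g1 e - g0 e) 0 with hdm
  have hdpm : ∀ e, dp e - dm e = g0 e - g1 e := by
    intro e
    rcases le_total (g0 e) (g1 e) with h | h
    · rw [hdp, hdm]; simp only
      rw [max_eq_right (by linarith), max_eq_left (by linarith)]; ring
    · rw [hdp, hdm]; simp only
      rw [max_eq_left (by linarith), max_eq_right (by linarith)]; ring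
  have hdp0 : ∀ e, 0 ≤ dp e := fun e => le_max_right _ _
  have hdm0 : ∀ e, 0 ≤ dm e := fun e => le_max_right _ _
  -- doubled edge universe
  set Ei2 : Finset (E ⊕ E) := N.Ein.image Sum.inl ∪ N.Eout.image Sum.inr with hEi2
  set Eo2 : Finset (E ⊕ E) := N.Eout.image Sum.inl ∪ N.Ein.image Sum.inr with hEo2
  set Et2 : Finset (E ⊕ E) := N.Eint.image Sum.inl ∪ N.Eint.image Sum.inr with hEt2
  set t2 : E ⊕ E → V := Sum.elim N.tail N.head with ht2
  set h2 : E ⊕ E → V := Sum.elim N.head N.tail with hh2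
  set d2 : E ⊕ E → ℝ := Sum.elim dp dm with hd2
  have hdisjlr : ∀ (s t : Finset E),
      Disjoint (s.image (Sum.inl : E → E ⊕ E)) (t.image (Sum.inr : E → E ⊕ E)) := by
    intro s t
    rw [Finset.disjoint_left]
    rintro x hx hx'
    simp only [Finset.mem_image] at hx hx'
    obtain ⟨a, _, rfl⟩ := hx
    obtain ⟨b, _, hb⟩ := hx'
    exact nomatch hb
  have hmeminl : ∀ (s : Finset E) (e : E), Sum.inl e ∈ s.image (Sum.inl : E → E ⊕ E) ↔ e ∈ s := by
    intro s e
    simp only [Finset.mem_image]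
    exact ⟨fun ⟨a, ha, hae⟩ => by cases Sum.inl_injective hae; exact ha,
      fun h => ⟨e, h, rfl⟩⟩
  have hmeminr : ∀ (s : Finset E) (e : E), Sum.inr e ∈ s.image (Sum.inr : E → E ⊕ E) ↔ e ∈ s := by
    intro s e
    simp only [Finset.mem_image]
    exact ⟨fun ⟨a, ha, hae⟩ => by cases Sum.inr_injective hae; exact ha,
      fun h => ⟨e, h, rfl⟩⟩
  have hmemU : ∀ (s t : Finset E) (e : E),
      (Sum.inl e ∈ s.image (Sum.inl : E → E ⊕ E) ∪ t.image Sum.inr ↔ e ∈ s)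
      ∧ (Sum.inr e ∈ s.image (Sum.inl : E → E ⊕ E) ∪ t.image Sum.inr ↔ e ∈ t) := by
    intro s t e
    constructor
    · rw [Finset.mem_union, hmeminl]
      constructor
      · rintro (h | h)
        · exact h
        · simp only [Finset.mem_image] at h
          obtain ⟨b, _, hb⟩ := h
          exact nomatch hb
      · exact Or.inl
    · rw [Finset.mem_union, hmeminr]
      constructor
      · rintro (h | h)
        · simp only [Finset.mem_image] at h
          obtain ⟨b, _, hb⟩ := h
          exact nomatch hb
        · exact h
      · exact Or.inr
  have hdisj2 : ∀ (s t s' t' : Finset E), Disjoint s s' → Disjoint t t' →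
      Disjoint (s.image (Sum.inl : E → E ⊕ E) ∪ t.image Sum.inr)
        (s'.image (Sum.inl : E → E ⊕ E) ∪ t'.image Sum.inr) := by
    intro s t s' t' h1 h2
    rw [Finset.disjoint_left]
    intro x hx hx'
    rcases x with e | e
    · rw [(hmemU _ _ _).1] at hx hx'
      exact Finset.disjoint_left.1 h1 hx hx'
    · rw [(hmemU _ _ _).2] at hx hx'
      exact Finset.disjoint_left.1 h2 hx hx'
  have hcov : ∀ e : E, e ∈ N.Ein ∨ e ∈ N.Eout ∨ e ∈ N.Eint := by
    intro e
    have : e ∈ N.Ein ∪ N.Eout ∪ N.Eint := hcover ▸ Finset.mem_univ e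
    simp only [Finset.mem_union] at this
    tauto
  have hcover2 : Ei2 ∪ Eo2 ∪ Et2 = Finset.univ := by
    rw [Finset.eq_univ_iff_forall]
    intro x
    rcases x with e | e
    · rcases hcov e with h | h | h
      · exact Finset.mem_union_left _ (Finset.mem_union_left _ ((hmemU N.Ein N.Eout e).1.mpr h))
      · exact Finset.mem_union_left _ (Finset.mem_union_right _ ((hmemU N.Eout N.Ein e).1.mpr h))
      · exact Finset.mem_union_right _ ((hmemU N.Eint N.Eint e).1.mpr h)
    · rcases hcov e with h | h | h
      · exact Finset.mem_union_left _ (Finset.mem_union_right _ ((hmemU N.Eout N.Ein e).2.mpr h))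
      · exact Finset.mem_union_left _ (Finset.mem_union_left _ ((hmemU N.Ein N.Eout e).2.mpr h))
      · exact Finset.mem_union_right _ ((hmemU N.Eint N.Eint e).2.mpr h)
  -- summation helper over doubled sets
  have sumSum : ∀ (s t : Finset E) (P : E ⊕ E → Prop) [DecidablePred P] (g : E ⊕ E → ℝ),
      ∑ x ∈ (s.image (Sum.inl : E → E ⊕ E) ∪ t.image Sum.inr).filter P, g x
      = ∑ e ∈ s.filter (fun e => P (Sum.inl e)), g (Sum.inl e)
      + ∑ e ∈ t.filter (fun e => P (Sum.inr e)), g (Sum.inr e) := by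
    intro s t P _ g
    rw [Finset.filter_union, Finset.filter_image, Finset.filter_image,
      Finset.sum_union (hdisjlr _ _),
      Finset.sum_image (fun a _ b _ h => Sum.inl_injective h),
      Finset.sum_image (fun a _ b _ h => Sum.inr_injective h)]
  have hd_it : Disjoint Ei2 Et2 := hdisj2 _ _ _ _ N.disj_in_int N.disj_out_int
  have hd_ot : Disjoint Eo2 Et2 := hdisj2 _ _ _ _ N.disj_out_int N.disj_in_int
  have hd_io : Disjoint Ei2 Eo2 := hdisj2 _ _ _ _ N.disj_in_out N.disj_in_out.symm
  have sumIO : ∀ (P : E ⊕ E → Prop) [DecidablePred P] (g : E ⊕ E → ℝ),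
      ∑ x ∈ (Ei2 ∪ Et2).filter P, g x
      = ∑ e ∈ (N.Ein ∪ N.Eint).filter (fun e => P (Sum.inl e)), g (Sum.inl e)
      + ∑ e ∈ (N.Eout ∪ N.Eint).filter (fun e => P (Sum.inr e)), g (Sum.inr e) := by
    intro P _ g
    rw [Finset.filter_union,
      Finset.sum_union (hd_it.mono (Finset.filter_subset _ _) (Finset.filter_subset _ _)),
      hEi2, hEt2, sumSum, sumSum, Finset.filter_union, Finset.filter_union,
      Finset.sum_union (N.disj_in_int.mono (Finset.filter_subset _ _) (Finset.filter_subset _ _)),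
      Finset.sum_union (N.disj_out_int.mono (Finset.filter_subset _ _) (Finset.filter_subset _ _))]
    ring
  have sumOI : ∀ (P : E ⊕ E → Prop) [DecidablePred P] (g : E ⊕ E → ℝ),
      ∑ x ∈ (Eo2 ∪ Et2).filter P, g x
      = ∑ e ∈ (N.Eout ∪ N.Eint).filter (fun e => P (Sum.inl e)), g (Sum.inl e)
      + ∑ e ∈ (N.Ein ∪ N.Eint).filter (fun e => P (Sum.inr e)), g (Sum.inr e) := by
    intro P _ g
    rw [Finset.filter_union,
      Finset.sum_union (hd_ot.mono (Finset.filter_subset _ _) (Finset.filter_subset _ _)),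
      hEo2, hEt2, sumSum, sumSum, Finset.filter_union, Finset.filter_union,
      Finset.sum_union (N.disj_out_int.mono (Finset.filter_subset _ _) (Finset.filter_subset _ _)),
      Finset.sum_union (N.disj_in_int.mono (Finset.filter_subset _ _) (Finset.filter_subset _ _))]
    ring
  -- conservation of the difference flow on the doubled network
  have hd2cons : ∀ v, ∑ x ∈ (Ei2 ∪ Et2).filter (fun x => h2 x = v), d2 x
      = ∑ x ∈ (Eo2 ∪ Et2).filter (fun x => t2 x = v), d2 x := by
    intro v
    rw [sumIO, sumOI]
    simp only [hh2, ht2, hd2, Sum.elim_inl, Sum.elim_inr]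
    have k1 : ∀ s : Finset E, ∑ e ∈ s, dp e - ∑ e ∈ s, dm e
        = ∑ e ∈ s, g0 e - ∑ e ∈ s, g1 e := by
      intro s
      rw [← Finset.sum_sub_distrib, ← Finset.sum_sub_distrib]
      exact Finset.sum_congr rfl (fun e _ => hdpm e)
    have e0 := hg0f.2.2 v
    have e1' := hg1f.2.2 v
    have k2 := k1 ((N.Ein ∪ N.Eint).filter (fun e => N.head e = v))
    have k3 := k1 ((N.Eout ∪ N.Eint).filter (fun e => N.tail e = v))
    linarith
  obtain ⟨n, δ, p, c1, c2, c3, c4, c5, c6, c7⟩ :=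
    decomp Ei2 Eo2 Et2 t2 h2 hd_io hd_it hd_ot hcover2 d2
      (fun x => by rcases x with e | e <;> simp [hd2, hdp0, hdm0]) hd2cons
  have hple : ∀ (i : Fin n) (x : E ⊕ E), 0 ≤ p i x := by
    intro i x; rcases c2 i x with hh | hh <;> simp [hh]
  have hp01 : ∀ (i : Fin n) (x : E ⊕ E), p i x ≤ 0 → p i x = 0 := by
    intro i x hx; rcases c2 i x with hh | hh
    · exact hh
    · rw [hh] at hx; linarith
  have hdpsum : ∀ e, dp e = ∑ i, δ i * p i (Sum.inl e) := by
    intro e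
    have := c4 (Sum.inl e)
    simpa [hd2] using this
  have hdmsum : ∀ e, dm e = ∑ i, δ i * p i (Sum.inr e) := by
    intro e
    have := c4 (Sum.inr e)
    simpa [hd2] using this
  -- per-component conservation in the base network
  have hq : ∀ (i : Fin n) (v : V),
      ∑ e ∈ (N.Ein ∪ N.Eint).filter (fun e => N.head e = v), p i (Sum.inl e)
      + ∑ e ∈ (N.Eout ∪ N.Eint).filter (fun e => N.tail e = v), p i (Sum.inr e)
      = ∑ e ∈ (N.Eout ∪ N.Eint).filter (fun e => N.tail e = v), p i (Sum.inl e)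
      + ∑ e ∈ (N.Ein ∪ N.Eint).filter (fun e => N.head e = v), p i (Sum.inr e) := by
    intro i v
    have := c3 i v
    rw [sumIO, sumOI] at this
    simpa only [hh2, ht2, Sum.elim_inl, Sum.elim_inr] using this
  -- the mixed flows
  set gmix : Finset (Fin n) → E → ℝ :=
    fun T e => g1 e + (∑ i ∈ T, δ i * p i (Sum.inl e) - ∑ i ∈ T, δ i * p i (Sum.inr e))
    with hgmix
  have hupP : ∀ (T : Finset (Fin n)) e, ∑ i ∈ T, δ i * p i (Sum.inl e) ≤ dp e := by
    intro T e
    rw [hdpsum e]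
    exact Finset.sum_le_sum_of_subset_of_nonneg (Finset.subset_univ T)
      (fun i _ _ => mul_nonneg (c1 i).le (hple i _))
  have hupM : ∀ (T : Finset (Fin n)) e, ∑ i ∈ T, δ i * p i (Sum.inr e) ≤ dm e := by
    intro T e
    rw [hdmsum e]
    exact Finset.sum_le_sum_of_subset_of_nonneg (Finset.subset_univ T)
      (fun i _ _ => mul_nonneg (c1 i).le (hple i _))
  have h0P : ∀ (T : Finset (Fin n)) e, 0 ≤ ∑ i ∈ T, δ i * p i (Sum.inl e) :=
    fun T e => Finset.sum_nonneg (fun i _ => mul_nonneg (c1 i).le (hple i _))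
  have h0M : ∀ (T : Finset (Fin n)) e, 0 ≤ ∑ i ∈ T, δ i * p i (Sum.inr e) :=
    fun T e => Finset.sum_nonneg (fun i _ => mul_nonneg (c1 i).le (hple i _))
  have hg0nn := hg0f.1
  have hg1nn := hg1f.1
  have hlowB : ∀ (T : Finset (Fin n)) e, 0 ≤ gmix T e := by
    intro T e
    have h1 := hupM T e
    have h2 := h0P T e
    have h3 : g1 e - dm e ≥ 0 := by
      rcases le_total (g0 e) (g1 e) with hh | hh
      · have : dm e = g1 e - g0 e := max_eq_left (by linarith)
        rw [this]; have := hg0nn e; linarith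
      · have : dm e = 0 := max_eq_right (by linarith)
        rw [this]; have := hg1nn e; linarith
    simp only [hgmix]
    linarith
  have hhighB : ∀ (T : Finset (Fin n)) e, gmix T e ≤ N.cap e := by
    intro T e
    have h1 := hupP T e
    have h2 := h0M T e
    have h3 : g1 e + dp e ≤ N.cap e := by
      rcases le_total (g0 e) (g1 e) with hh | hh
      · have : dp e = 0 := max_eq_right (by linarith)
        rw [this]; have := hg1f.2.1 e; linarith
      · have : dp e = g0 e - g1 e := max_eq_left (by linarith)
        rw [this]; have := hg0f.2.1 e; linarith
    simp only [hgmix]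
    linarith
  have hmixfeas : ∀ T : Finset (Fin n), N.Feasible (gmix T) := by
    intro T
    refine ⟨hlowB T, hhighB T, fun v => ?_⟩
    simp only [hgmix, Finset.sum_add_distrib, Finset.sum_sub_distrib]
    rw [hg1f.2.2 v]
    have swap2 : ∀ (s : Finset E) (w : Fin n → E → ℝ),
        ∑ e ∈ s, ∑ i ∈ T, δ i * w i e = ∑ i ∈ T, δ i * ∑ e ∈ s, w i e := by
      intro s w
      rw [Finset.sum_comm]
      exact Finset.sum_congr rfl (fun i _ => (Finset.mul_sum _ _ _).symm)
    rw [swap2, swap2, swap2, swap2]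
    have key : ∑ i ∈ T, δ i * ∑ e ∈ (N.Ein ∪ N.Eint).filter (fun e => N.head e = v), p i (Sum.inl e)
        - ∑ i ∈ T, δ i * ∑ e ∈ (N.Ein ∪ N.Eint).filter (fun e => N.head e = v), p i (Sum.inr e)
        = ∑ i ∈ T, δ i * ∑ e ∈ (N.Eout ∪ N.Eint).filter (fun e => N.tail e = v), p i (Sum.inl e)
        - ∑ i ∈ T, δ i * ∑ e ∈ (N.Eout ∪ N.Eint).filter (fun e => N.tail e = v), p i (Sum.inr e) := by
      rw [← Finset.sum_sub_distrib, ← Finset.sum_sub_distrib]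
      refine Finset.sum_congr rfl (fun i _ => ?_)
      have := hq i v
      linear_combination (δ i) * this
    linarith
  have hmixsup : ∀ T : Finset (Fin n), N.Sup (insert e1 A) B (gmix T) := by
    intro T e he
    have hg0z : g0 e = 0 := by
      apply hg0s
      rcases Finset.mem_union.1 he with h1 | h1
      · refine Finset.mem_union_left _ ?_
        rw [Finset.mem_sdiff] at h1 ⊢
        exact ⟨h1.1, fun hc => h1.2 (Finset.mem_insert_of_mem hc)⟩
      · exact Finset.mem_union_right _ h1
    have hg1z : g1 e = 0 := hg1s e he
    have hdpz : dp e = 0 := by rw [hdp]; simp only; rw [hg0z, hg1z]; simp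
    have hdmz : dm e = 0 := by rw [hdm]; simp only; rw [hg0z, hg1z]; simp
    have l1 := hlowB T e
    have l2 := hupP T e
    have l3 := hupM T e
    have l4 := h0P T e
    have l5 := h0M T e
    simp only [hgmix] at l1 ⊢
    rw [hdpz] at l2
    rw [hdmz] at l3
    linarith
  -- value of a mix on a set of edges
  have hmixval : ∀ (T : Finset (Fin n)) (s : Finset E),
      ∑ e ∈ s, gmix T e = ∑ e ∈ s, g1 e
        + ∑ i ∈ T, δ i * (∑ e ∈ s, p i (Sum.inl e) - ∑ e ∈ s, p i (Sum.inr e)) := by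
    intro T s
    simp only [hgmix, Finset.sum_add_distrib, Finset.sum_sub_distrib]
    congr 1
    rw [Finset.sum_comm (s := s) (t := T)]
    rw [Finset.sum_comm (s := s) (t := T)]
    rw [← Finset.sum_sub_distrib]
    refine Finset.sum_congr rfl (fun i _ => ?_)
    rw [← Finset.mul_sum, ← Finset.mul_sum]
    ring
  -- alpha and beta
  set α : Fin n → ℝ := fun i => ∑ a ∈ A, p i (Sum.inl a) with hα
  set β : Fin n → ℝ := fun i => ∑ a ∈ A, p i (Sum.inr a) with hβ
  have himg_insert_l : ((insert e1 A).image (Sum.inl : E → E ⊕ E)) ⊆ Ei2 := by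
    intro x hx
    simp only [Finset.mem_image] at hx
    obtain ⟨a, ha, rfl⟩ := hx
    exact Finset.mem_union_left _ ((hmeminl N.Ein a).2 (Finset.insert_subset he1 hA ha))
  have himg_insert_r : ((insert e1 A).image (Sum.inr : E → E ⊕ E)) ⊆ Eo2 := by
    intro x hx
    simp only [Finset.mem_image] at hx
    obtain ⟨a, ha, rfl⟩ := hx
    exact Finset.mem_union_right _ ((hmeminr N.Ein a).2 (Finset.insert_subset he1 hA ha))
  have hsum_img_l : ∀ (i : Fin n) (s : Finset E),
      ∑ x ∈ s.image (Sum.inl : E → E ⊕ E), p i x = ∑ e ∈ s, p i (Sum.inl e) :=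
    fun i s => Finset.sum_image (fun a _ b _ hh => Sum.inl_injective hh)
  have hsum_img_r : ∀ (i : Fin n) (s : Finset E),
      ∑ x ∈ s.image (Sum.inr : E → E ⊕ E), p i x = ∑ e ∈ s, p i (Sum.inr e) :=
    fun i s => Finset.sum_image (fun a _ b _ hh => Sum.inr_injective hh)
  have hkey1 : ∀ i, p i (Sum.inl e1) + α i ≤ 1 := by
    intro i
    have h1 : ∑ x ∈ (insert e1 A).image (Sum.inl : E → E ⊕ E), p i x ≤ 1 :=
      le_trans (Finset.sum_le_sum_of_subset_of_nonneg himg_insert_l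
        (fun x _ _ => hple i x)) (c5 i)
    rw [hsum_img_l, Finset.sum_insert he1A] at h1
    exact h1
  have hkey2 : ∀ i, p i (Sum.inr e1) + β i ≤ 1 := by
    intro i
    have h1 : ∑ x ∈ (insert e1 A).image (Sum.inr : E → E ⊕ E), p i x ≤ 1 :=
      le_trans (Finset.sum_le_sum_of_subset_of_nonneg himg_insert_r
        (fun x _ _ => hple i x)) (c6 i)
    rw [hsum_img_r, Finset.sum_insert he1A] at h1
    exact h1
  have hα0 : ∀ i, 0 ≤ α i := fun i => Finset.sum_nonneg (fun a _ => hple i _)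
  have hβ0 : ∀ i, 0 ≤ β i := fun i => Finset.sum_nonneg (fun a _ => hple i _)
  have hα1 : ∀ i, α i ≠ 0 → α i = 1 := by
    intro i hi
    obtain ⟨a, ha, hpa⟩ := Finset.exists_ne_zero_of_sum_ne_zero hi
    have hpa1 : p i (Sum.inl a) = 1 := (c2 i _).resolve_left hpa
    have hge : (1:ℝ) ≤ α i := by
      rw [← hpa1]
      exact Finset.single_le_sum (fun a _ => hple i _) ha
    have hle : α i ≤ 1 := by have := hkey1 i; have := hple i (Sum.inl e1); linarith
    linarith
  -- the selection
  set S : Finset (Fin n) := Finset.univ.filter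
    (fun i => p i (Sum.inr e1) ≠ 0 ∧ α i ≠ 0) with hS
  have hSprop : ∀ i ∈ S, p i (Sum.inr e1) = 1 ∧ α i = 1 ∧ p i (Sum.inl e1) = 0 ∧ β i = 0 := by
    intro i hi
    simp only [hS, Finset.mem_filter] at hi
    have h1 : p i (Sum.inr e1) = 1 := (c2 i _).resolve_left hi.2.1
    have h2 : α i = 1 := hα1 i hi.2.2
    have h3 : p i (Sum.inl e1) = 0 := by
      apply hp01
      have := hkey1 i
      linarith
    have h4 : β i = 0 := by
      have := hkey2 i
      have := hβ0 i
      linarith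
    exact ⟨h1, h2, h3, h4⟩
  refine ⟨gmix S, hmixfeas S, hmixsup S, ?_, ?_⟩
  · -- value on A at least maxFromTo A B
    rw [hmixval S A]
    have hSnet : ∑ i ∈ S, δ i * (∑ e ∈ A, p i (Sum.inl e) - ∑ e ∈ A, p i (Sum.inr e))
        = ∑ i ∈ S, δ i := by
      refine Finset.sum_congr rfl (fun i hi => ?_)
      obtain ⟨_, h2, _, h4⟩ := hSprop i hi
      rw [show (∑ e ∈ A, p i (Sum.inl e)) = α i from rfl,
        show (∑ e ∈ A, p i (Sum.inr e)) = β i from rfl, h2, h4]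
      ring
    rw [hSnet]
    -- key inequality : sum over S of delta dominates the defect
    have hdA : ∑ a ∈ A, g0 a - ∑ a ∈ A, g1 a = ∑ i, δ i * (α i - β i) := by
      have h1 : ∑ a ∈ A, g0 a - ∑ a ∈ A, g1 a = ∑ a ∈ A, dp a - ∑ a ∈ A, dm a := by
        rw [← Finset.sum_sub_distrib, ← Finset.sum_sub_distrib]
        exact (Finset.sum_congr rfl (fun e _ => (hdpm e).symm))
      have h2 : ∑ a ∈ A, dp a = ∑ i, δ i * α i := by
        rw [Finset.sum_congr rfl (fun a _ => hdpsum a), Finset.sum_comm]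
        exact Finset.sum_congr rfl (fun i _ => (Finset.mul_sum _ _ _).symm)
      have h3 : ∑ a ∈ A, dm a = ∑ i, δ i * β i := by
        rw [Finset.sum_congr rfl (fun a _ => hdmsum a), Finset.sum_comm]
        exact Finset.sum_congr rfl (fun i _ => (Finset.mul_sum _ _ _).symm)
      rw [h1, h2, h3, ← Finset.sum_sub_distrib]
      exact Finset.sum_congr rfl (fun i _ => by ring)
    have hcompl : ∀ i ∈ Sᶜ, δ i * (α i - β i) ≤ 0 := by
      intro i hi
      rw [Finset.mem_compl] at hi
      by_cases hαz : α i = 0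
      · have := hβ0 i
        have := (c1 i).le
        rw [hαz]
        apply mul_nonpos_of_nonneg_of_nonpos this
        linarith
      · -- α i = 1 and p i (inr e1) = 0
        have hαi : α i = 1 := hα1 i hαz
        have hpre1 : p i (Sum.inr e1) = 0 := by
          by_contra hc
          exact hi (by simp [hS, hc, hαz])
        -- find an output of the component
        have houtsum : ∑ x ∈ Eo2, p i x = 1 := by
          have hle := c6 i
          have hge : (1:ℝ) ≤ ∑ x ∈ Eo2, p i x := by
            rw [← c7 i, ← hαi]
            have : (A.image (Sum.inl : E → E ⊕ E)) ⊆ Ei2 := by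
              intro x hx
              simp only [Finset.mem_image] at hx
              obtain ⟨a, ha, rfl⟩ := hx
              exact Finset.mem_union_left _ ((hmeminl N.Ein a).2 (hA ha))
            calc α i = ∑ x ∈ A.image (Sum.inl : E → E ⊕ E), p i x := (hsum_img_l i A).symm
              _ ≤ ∑ x ∈ Ei2, p i x :=
                Finset.sum_le_sum_of_subset_of_nonneg this (fun x _ _ => hple i x)
          linarith
        have hex : ∃ x ∈ Eo2, p i x ≠ 0 := by
          apply Finset.exists_ne_zero_of_sum_ne_zero
          rw [houtsum]; norm_num
        obtain ⟨x, hxEo2, hpx⟩ := hex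
        have hpx1 : p i x = 1 := (c2 i _).resolve_left hpx
        rcases x with b | a'
        · -- x = inl b, b ∈ Eout
          have hb : b ∈ N.Eout := by
            rw [hEo2, (hmemU _ _ b).1] at hxEo2
            exact hxEo2
          by_cases hbB : b ∈ B
          · -- contradiction with optimality of g1
            exfalso
            have hp1 : p i (Sum.inl e1) = 0 := by
              apply hp01
              have := hkey1 i
              linarith
            have hQsub : insert (Sum.inl b) ((insert e1 A).image (Sum.inr : E → E ⊕ E))
                ⊆ Eo2 := by
              intro x hx
              rcases Finset.mem_insert.1 hx with rfl | hx
              · exact Finset.mem_union_left _ ((hmeminl N.Eout b).2 hb)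
              · exact himg_insert_r hx
            have hnotmem : (Sum.inl b : E ⊕ E) ∉ (insert e1 A).image (Sum.inr : E → E ⊕ E) := by
              simp only [Finset.mem_image]
              rintro ⟨a, _, hc⟩
              exact nomatch hc
            have hbud : p i (Sum.inl b) + (p i (Sum.inr e1) + β i) ≤ 1 := by
              have h1 : ∑ x ∈ insert (Sum.inl b) ((insert e1 A).image (Sum.inr : E → E ⊕ E)),
                  p i x ≤ 1 :=
                le_trans (Finset.sum_le_sum_of_subset_of_nonneg hQsub
                  (fun x _ _ => hple i x)) (c6 i)
              rw [Finset.sum_insert hnotmem, hsum_img_r, Finset.sum_insert he1A] at h1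
              exact h1
            have hβz : β i = 0 := by
              have := hβ0 i
              rw [hpx1, hpre1] at hbud
              linarith
            have hval1 : ∑ e ∈ insert e1 A, gmix {i} e
                = N.maxFromTo (insert e1 A) B + δ i := by
              rw [hmixval {i} (insert e1 A), Finset.sum_singleton, hg1v]
              simp only [Finset.sum_insert he1A]
              rw [hp1, hpre1,
                show (∑ e ∈ A, p i (Sum.inl e)) = α i from rfl,
                show (∑ e ∈ A, p i (Sum.inr e)) = β i from rfl, hαi, hβz]
              ring
            have hle := N.le_maxFromTo (hmixfeas {i}) (hmixsup {i})
            rw [hval1] at hle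
            have := c1 i
            linarith
          · -- b ∉ B : g0 b must vanish yet dp b > 0
            exfalso
            have hdpb : 0 < dp b := by
              rw [hdpsum b]
              have : δ i * p i (Sum.inl b) ≤ ∑ j, δ j * p j (Sum.inl b) :=
                Finset.single_le_sum (f := fun j => δ j * p j (Sum.inl b))
                  (fun j _ => mul_nonneg (c1 j).le (hple j _)) (Finset.mem_univ i)
              have hpx1' : p i (Sum.inl b) = 1 := hpx1
              rw [hpx1'] at this
              have := c1 i
              linarith
            have hg0b : g0 b = 0 := hg0s b (Finset.mem_union_right _
              (Finset.mem_sdiff.2 ⟨hb, hbB⟩))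
            have : dp b ≤ 0 := by
              rw [hdp]
              simp only
              rw [hg0b]
              have := hg1nn b
              simp [max_le_iff]
              linarith
            linarith
        · -- x = inr a', a' ∈ Ein
          have ha' : a' ∈ N.Ein := by
            rw [hEo2, (hmemU _ _ a').2] at hxEo2
            exact hxEo2
          by_cases ha'e1 : a' = e1
          · exfalso; rw [ha'e1] at hpx; exact hpx hpre1
          by_cases ha'A : a' ∈ A
          · -- β i ≥ 1
            have hβge : (1:ℝ) ≤ β i := by
              rw [← hpx1]
              exact Finset.single_le_sum (fun a _ => hple i _) ha'A
            have := (c1 i).le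
            apply mul_nonpos_of_nonneg_of_nonpos this
            linarith
          · -- a' outside insert e1 A : g1 a' = 0 yet dm a' > 0
            exfalso
            have hdma : 0 < dm a' := by
              rw [hdmsum a']
              have : δ i * p i (Sum.inr a') ≤ ∑ j, δ j * p j (Sum.inr a') :=
                Finset.single_le_sum (f := fun j => δ j * p j (Sum.inr a'))
                  (fun j _ => mul_nonneg (c1 j).le (hple j _)) (Finset.mem_univ i)
              rw [hpx1] at this
              have := c1 i
              linarith
            have hg1a : g1 a' = 0 := hg1s a' (Finset.mem_union_left _
              (Finset.mem_sdiff.2 ⟨ha', by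
                intro hc
                rcases Finset.mem_insert.1 hc with hc1 | hc1
                · exact ha'e1 hc1
                · exact ha'A hc1⟩))
            have : dm a' ≤ 0 := by
              rw [hdm]
              simp only
              rw [hg1a]
              have := hg0nn a'
              simp [max_le_iff]
              linarith
            linarith
    have hsplit : ∑ i, δ i * (α i - β i)
        = ∑ i ∈ S, δ i * (α i - β i) + ∑ i ∈ Sᶜ, δ i * (α i - β i) :=
      (Finset.sum_add_sum_compl S _).symm
    have hSsum : ∑ i ∈ S, δ i * (α i - β i) = ∑ i ∈ S, δ i := by
      refine Finset.sum_congr rfl (fun i hi => ?_)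
      obtain ⟨_, h2, _, h4⟩ := hSprop i hi
      rw [h2, h4]; ring
    have hcomplsum : ∑ i ∈ Sᶜ, δ i * (α i - β i) ≤ 0 :=
      Finset.sum_nonpos hcompl
    have : ∑ a ∈ A, g0 a - ∑ a ∈ A, g1 a ≤ ∑ i ∈ S, δ i := by
      rw [hdA, hsplit, hSsum]
      linarith
    rw [← hg0v]
    linarith
  · -- value on insert e1 A is exactly maxFromTo (insert e1 A) B
    rw [hmixval S (insert e1 A), hg1v]
    simp only [Finset.sum_insert he1A]
    have hz : ∑ i ∈ S, δ i * (p i (Sum.inl e1) + ∑ e ∈ A, p i (Sum.inl e)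
        - (p i (Sum.inr e1) + ∑ e ∈ A, p i (Sum.inr e))) = 0 := by
      refine Finset.sum_eq_zero (fun i hi => ?_)
      obtain ⟨h1, h2, h3, h4⟩ := hSprop i hi
      rw [h1, h3, show (∑ e ∈ A, p i (Sum.inl e)) = α i from rfl,
        show (∑ e ∈ A, p i (Sum.inr e)) = β i from rfl, h2, h4]
      ring
    linarith [hz]


def rev (N : FlowNetwork V E) : FlowNetwork V E where
  Ein := N.Eout
  Eout := N.Ein
  Eint := N.Eint
  disj_in_out := N.disj_in_out.symm
  disj_in_int := N.disj_out_int
  disj_out_int := N.disj_in_int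
  tail := N.head
  head := N.tail
  no_self_loop := fun e he => (N.no_self_loop e he).symm
  no_multi := fun e he e' he' h1 h2 => N.no_multi e he e' he' h2 h1
  cap := N.cap
  cap_nonneg := N.cap_nonneg

lemma rev_feasible (N : FlowNetwork V E) (f : E → ℝ) :
    N.rev.Feasible f ↔ N.Feasible f := by
  unfold Feasible rev
  constructor <;> rintro ⟨a, b, c⟩ <;> exact ⟨a, b, fun v => (c v).symm⟩

lemma rev_sup (N : FlowNetwork V E) (A B : Finset E) (f : E → ℝ) :
    N.rev.Sup B A f ↔ N.Sup A B f := by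
  unfold Sup rev
  simp only
  constructor <;> intro hh e he <;> apply hh e <;>
    (rw [Finset.mem_union] at he ⊢; tauto)

lemma rev_cover (N : FlowNetwork V E) (hcover : N.Ein ∪ N.Eout ∪ N.Eint = Finset.univ) :
    N.rev.Ein ∪ N.rev.Eout ∪ N.rev.Eint = Finset.univ := by
  unfold rev
  simp only
  rw [Finset.union_comm N.Eout N.Ein]
  exact hcover

lemma rev_max (N : FlowNetwork V E) {A B : Finset E} (hA : A ⊆ N.Ein) (hB : B ⊆ N.Eout) :
    N.rev.maxFromTo B A = N.maxFromTo A B := by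
  rw [maxFromTo_eq_sSup, maxFromTo_eq_sSup]
  congr 1
  ext x
  simp only [vSet, Set.mem_setOf_eq]
  constructor
  · rintro ⟨f, hf, hsup, rfl⟩
    have hf' : N.Feasible f := (N.rev_feasible f).1 hf
    have hsup' : N.Sup A B f := (N.rev_sup A B f).1 hsup
    exact ⟨f, hf', hsup', (N.value_in_out hf' hsup' hA hB).symm⟩
  · rintro ⟨f, hf, hsup, rfl⟩
    exact ⟨f, (N.rev_feasible f).2 hf, (N.rev_sup A B f).2 hsup,
      N.value_in_out hf hsup hA hB⟩

lemma exists_slack (N : FlowNetwork V E) (hcover : N.Ein ∪ N.Eout ∪ N.Eint = Finset.univ)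
    {e1 : E} {A B : Finset E} (he1 : e1 ∈ N.Ein) (he1A : e1 ∉ A) (hA : A ⊆ N.Ein)
    (hB : B ⊆ N.Eout) {s : ℝ} (hs0 : 0 ≤ s)
    (hs1 : s ≤ N.maxFromTo (insert e1 A) B - N.maxFromTo A B) :
    ∃ f : E → ℝ, N.Feasible f ∧ N.Sup (insert e1 A) B f ∧
      ∑ e ∈ A, f e = N.maxFromTo A B ∧ f e1 = s := by
  obtain ⟨f', hf'f, hf's, hf'A, hf'I⟩ := N.push_extra hcover he1 he1A hA hB
  have hf'Ale : ∑ e ∈ A, f' e ≤ N.maxFromTo A B := N.drop_input hcover he1 he1A hA hf'f hf's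
  have hf'Aeq : ∑ e ∈ A, f' e = N.maxFromTo A B := le_antisymm hf'Ale hf'A
  have hf'e1 : f' e1 = N.maxFromTo (insert e1 A) B - N.maxFromTo A B := by
    rw [Finset.sum_insert he1A, hf'Aeq] at hf'I
    linarith
  obtain ⟨g, hgf, hgs, hgv⟩ := N.exists_opt A B
  have hge1 : g e1 = 0 := hgs e1 (Finset.mem_union_left _ (Finset.mem_sdiff.2 ⟨he1, he1A⟩))
  have hgs' : N.Sup (insert e1 A) B g := by
    intro e he
    apply hgs e
    rcases Finset.mem_union.1 he with h1 | h1
    · refine Finset.mem_union_left _ ?_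
      rw [Finset.mem_sdiff] at h1 ⊢
      exact ⟨h1.1, fun hc => h1.2 (Finset.mem_insert_of_mem hc)⟩
    · exact Finset.mem_union_right _ h1
  set ti := N.maxFromTo (insert e1 A) B - N.maxFromTo A B with hti
  by_cases htiz : ti = 0
  · have hsz : s = 0 := le_antisymm (by rw [← htiz]; exact hs1) hs0
    exact ⟨g, hgf, hgs', hgv, by rw [hge1, hsz]⟩
  · have htipos : 0 < ti := by
      have : 0 ≤ ti := by
        rw [hti]
        have := N.maxFromTo_mono (Finset.subset_insert e1 A) (le_refl B)
          (Finset.insert_subset he1 hA)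
        linarith
      rcases lt_or_eq_of_le this with hh | hh
      · exact hh
      · exact absurd hh.symm htiz
    set lam := s / ti with hlam
    have hlam0 : 0 ≤ lam := div_nonneg hs0 htipos.le
    have hlam1 : lam ≤ 1 := by
      rw [hlam, div_le_one htipos]
      exact hs1
    set f : E → ℝ := fun e => (1 - lam) * g e + lam * f' e with hfdef
    have hffeas : N.Feasible f := by
      refine ⟨fun e => ?_, fun e => ?_, fun v => ?_⟩
      · have := hgf.1 e
        have := hf'f.1 e
        have h1 : (0:ℝ) ≤ 1 - lam := by linarith
        simp only [hfdef]
        positivity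
      · have h1 := hgf.2.1 e
        have h2 := hf'f.2.1 e
        have h3 := hgf.1 e
        have h4 := hf'f.1 e
        simp only [hfdef]
        nlinarith
      · simp only [hfdef, Finset.sum_add_distrib, ← Finset.mul_sum]
        rw [hgf.2.2 v, hf'f.2.2 v]
    have hfsup : N.Sup (insert e1 A) B f := by
      intro e he
      simp only [hfdef]
      rw [hgs' e he, hf's e he]
      ring
    refine ⟨f, hffeas, hfsup, ?_, ?_⟩
    · simp only [hfdef, Finset.sum_add_distrib, ← Finset.mul_sum]
      rw [hgv, hf'Aeq]
      ring
    · simp only [hfdef]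
      rw [hge1, ← hti] at *
      rw [hf'e1, hlam]
      field_simp
      ring


/-- splicing across two disjoint networks, Case 1 of the induction:
`Nk` is obtained from `Ni` and `Nj` (on disjoint vertex/edge universes, modelled by
sum types) by splicing the input edge `e1` of `Ni` and the output edge `e2` of `Nj`
into a single internal edge `e` (encoded as `Sum.inl e1`; the leftover half
`Sum.inr e2` is junk, belonging to none of the three edge classes of `Nk`).
Then `maxFromTo` of the spliced network is given by the stated formula. -/
theorem stmt12
    {Vi Ei Vj Ej : Type} [Fintype Vi] [Fintype Ei] [DecidableEq Vi] [DecidableEq Ei]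
    [Fintype Vj] [Fintype Ej] [DecidableEq Vj] [DecidableEq Ej]
    (Ni : FlowNetwork Vi Ei) (Nj : FlowNetwork Vj Ej)
    (hcoveri : Ni.Ein ∪ Ni.Eout ∪ Ni.Eint = Finset.univ)
    (hcoverj : Nj.Ein ∪ Nj.Eout ∪ Nj.Eint = Finset.univ)
    (e1 : Ei) (e2 : Ej) (he1 : e1 ∈ Ni.Ein) (he2 : e2 ∈ Nj.Eout)
    (hcap12 : Ni.cap e1 = Nj.cap e2)
    (Nk : FlowNetwork (Vi ⊕ Vj) (Ei ⊕ Ej))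
    (hEin : Nk.Ein = (Ni.Ein.erase e1).image Sum.inl ∪ Nj.Ein.image Sum.inr)
    (hEout : Nk.Eout = Ni.Eout.image Sum.inl ∪ (Nj.Eout.erase e2).image Sum.inr)
    (hEint : Nk.Eint =
      insert (Sum.inl e1) (Ni.Eint.image Sum.inl ∪ Nj.Eint.image Sum.inr))
    (hheadl : ∀ e : Ei, Nk.head (Sum.inl e) = Sum.inl (Ni.head e))
    (htaill : ∀ e : Ei, e ≠ e1 → Nk.tail (Sum.inl e) = Sum.inl (Ni.tail e))
    (hsplice : Nk.tail (Sum.inl e1) = Sum.inr (Nj.tail e2))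
    (hheadr : ∀ e : Ej, Nk.head (Sum.inr e) = Sum.inr (Nj.head e))
    (htailr : ∀ e : Ej, Nk.tail (Sum.inr e) = Sum.inr (Nj.tail e))
    (hcapl : ∀ e : Ei, Nk.cap (Sum.inl e) = Ni.cap e)
    (hcapr : ∀ e : Ej, Nk.cap (Sum.inr e) = Nj.cap e)
    (A1 B1 : Finset Ei) (A2 B2 : Finset Ej)
    (hA1 : A1 ⊆ Ni.Ein.erase e1) (hA2 : A2 ⊆ Nj.Ein)
    (hB1 : B1 ⊆ Ni.Eout) (hB2 : B2 ⊆ Nj.Eout.erase e2) :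
    Nk.maxFromTo (A1.image Sum.inl ∪ A2.image Sum.inr)
                 (B1.image Sum.inl ∪ B2.image Sum.inr) =
      Ni.maxFromTo A1 B1 + Nj.maxFromTo A2 B2 +
        min (Ni.maxFromTo (insert e1 A1) B1 - Ni.maxFromTo A1 B1)
            (Nj.maxFromTo A2 (insert e2 B2) - Nj.maxFromTo A2 B2) := by
  classical
  -- basic memberships
  have hA1' : A1 ⊆ Ni.Ein := fun a ha => Finset.mem_of_mem_erase (hA1 ha)
  have he1A1 : e1 ∉ A1 := fun hc => (Finset.mem_erase.1 (hA1 hc)).1 rfl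
  have hB2' : B2 ⊆ Nj.Eout := fun b hb => Finset.mem_of_mem_erase (hB2 hb)
  have he2B2 : e2 ∉ B2 := fun hc => (Finset.mem_erase.1 (hB2 hc)).1 rfl
  have he1out : e1 ∉ Ni.Eout := Finset.disjoint_left.1 Ni.disj_in_out he1
  have he1int : e1 ∉ Ni.Eint := Finset.disjoint_left.1 Ni.disj_in_int he1
  have he2in : e2 ∉ Nj.Ein := Finset.disjoint_left.1 Nj.disj_in_out.symm he2
  have he2int : e2 ∉ Nj.Eint := Finset.disjoint_left.1 Nj.disj_out_int he2
  set Mi := Ni.maxFromTo A1 B1 with hMi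
  set Mi' := Ni.maxFromTo (insert e1 A1) B1 with hMi'
  set Mj := Nj.maxFromTo A2 B2 with hMj
  set Mj' := Nj.maxFromTo A2 (insert e2 B2) with hMj'
  set A : Finset (Ei ⊕ Ej) := A1.image Sum.inl ∪ A2.image Sum.inr with hA
  set B : Finset (Ei ⊕ Ej) := B1.image Sum.inl ∪ B2.image Sum.inr with hB
  have hMile : Mi ≤ Mi' :=
    Ni.maxFromTo_mono (Finset.subset_insert e1 A1) le_rfl (Finset.insert_subset he1 hA1')
  have hMjle : Mj ≤ Mj' := by
    have h1 : Nj.rev.maxFromTo B2 A2 ≤ Nj.rev.maxFromTo (insert e2 B2) A2 :=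
      Nj.rev.maxFromTo_mono (Finset.subset_insert e2 B2) le_rfl
        (Finset.insert_subset he2 hB2')
    rwa [Nj.rev_max hA2 hB2', Nj.rev_max hA2 (Finset.insert_subset he2 hB2')] at h1
  -- class-set identities for Nk
  have hIK : Nk.Ein ∪ Nk.Eint
      = (Ni.Ein ∪ Ni.Eint).image Sum.inl ∪ (Nj.Ein ∪ Nj.Eint).image Sum.inr := by
    ext x
    rw [Finset.mem_union, hEin, hEint, Finset.mem_insert]
    rcases x with e | e
    · rw [mem_inl_union, mem_inl_union, Finset.mem_erase, mem_inl_union, Finset.mem_union]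
      constructor
      · rintro (⟨hne, h⟩ | (h | h))
        · exact Or.inl h
        · cases Sum.inl_injective h; exact Or.inl he1
        · exact Or.inr h
      · rintro (h | h)
        · by_cases he : e = e1
          · subst he; exact Or.inr (Or.inl rfl)
          · exact Or.inl ⟨he, h⟩
        · exact Or.inr (Or.inr h)
    · rw [mem_inr_union, mem_inr_union, mem_inr_union, Finset.mem_union]
      constructor
      · rintro (h | (h | h))
        · exact Or.inl h
        · exact nomatch h
        · exact Or.inr h
      · rintro (h | h)
        · exact Or.inl h
        · exact Or.inr (Or.inr h)
  have hOK : Nk.Eout ∪ Nk.Eint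
      = insert (Sum.inl e1)
        ((Ni.Eout ∪ Ni.Eint).image Sum.inl ∪ ((Nj.Eout.erase e2) ∪ Nj.Eint).image Sum.inr) := by
    ext x
    rw [Finset.mem_union, hEout, hEint, Finset.mem_insert, Finset.mem_insert]
    rcases x with e | e
    · rw [mem_inl_union, mem_inl_union, mem_inl_union, Finset.mem_union]
      constructor
      · rintro (h | (h | h))
        · exact Or.inr (Or.inl h)
        · exact Or.inl h
        · exact Or.inr (Or.inr h)
      · rintro (h | (h | h))
        · exact Or.inr (Or.inl h)
        · exact Or.inl h
        · exact Or.inr (Or.inr h)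
    · rw [mem_inr_union, mem_inr_union, mem_inr_union, Finset.mem_union]
      constructor
      · rintro (h | (h | h))
        · exact Or.inr (Or.inl h)
        · exact nomatch h
        · exact Or.inr (Or.inr h)
      · rintro (h | (h | h))
        · exact nomatch h
        · exact Or.inl h
        · exact Or.inr (Or.inr h)
  -- conservation-transfer sum identities
  have hine1 : ∀ e, e ∈ Ni.Eout ∪ Ni.Eint → e ≠ e1 := by
    intro e he hc
    subst hc
    rcases Finset.mem_union.1 he with h | h
    · exact he1out h
    · exact he1int h
  have hjne2 : ∀ e, e ∈ (Nj.Eout.erase e2) ∪ Nj.Eint → e ≠ e2 := by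
    intro e he hc
    subst hc
    rcases Finset.mem_union.1 he with h | h
    · exact (Finset.mem_erase.1 h).1 rfl
    · exact he2int h
  have hLi : ∀ (F : Ei ⊕ Ej → ℝ) (w : Vi),
      ∑ x ∈ (Nk.Ein ∪ Nk.Eint).filter (fun x => Nk.head x = Sum.inl w), F x
      = ∑ e ∈ (Ni.Ein ∪ Ni.Eint).filter (fun e => Ni.head e = w), F (Sum.inl e) := by
    intro F w
    rw [hIK, sum_filter_inl_inr]
    have hj : (Nj.Ein ∪ Nj.Eint).filter (fun e => Nk.head (Sum.inr e) = Sum.inl w) = ∅ := by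
      rw [Finset.filter_eq_empty_iff]
      intro e _
      rw [hheadr]
      exact fun h => nomatch h
    rw [hj, Finset.sum_empty, add_zero]
    exact Finset.sum_congr (Finset.filter_congr (fun e _ => by
      rw [hheadl]
      exact ⟨fun h => Sum.inl_injective h, fun h => by rw [h]⟩)) (fun _ _ => rfl)
  have hRi : ∀ (F : Ei ⊕ Ej → ℝ) (w : Vi),
      ∑ x ∈ (Nk.Eout ∪ Nk.Eint).filter (fun x => Nk.tail x = Sum.inl w), F x
      = ∑ e ∈ (Ni.Eout ∪ Ni.Eint).filter (fun e => Ni.tail e = w), F (Sum.inl e) := by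
    intro F w
    rw [hOK, Finset.filter_insert, if_neg (by rw [hsplice]; exact fun h => nomatch h),
      sum_filter_inl_inr]
    have hj : ((Nj.Eout.erase e2) ∪ Nj.Eint).filter
        (fun e => Nk.tail (Sum.inr e) = Sum.inl w) = ∅ := by
      rw [Finset.filter_eq_empty_iff]
      intro e _
      rw [htailr]
      exact fun h => nomatch h
    rw [hj, Finset.sum_empty, add_zero]
    exact Finset.sum_congr (Finset.filter_congr (fun e he => by
      rw [htaill e (hine1 e he)]
      exact ⟨fun h => Sum.inl_injective h, fun h => by rw [h]⟩)) (fun _ _ => rfl)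
  have hLj : ∀ (F : Ei ⊕ Ej → ℝ) (w : Vj),
      ∑ x ∈ (Nk.Ein ∪ Nk.Eint).filter (fun x => Nk.head x = Sum.inr w), F x
      = ∑ e ∈ (Nj.Ein ∪ Nj.Eint).filter (fun e => Nj.head e = w), F (Sum.inr e) := by
    intro F w
    rw [hIK, sum_filter_inl_inr]
    have hi : (Ni.Ein ∪ Ni.Eint).filter (fun e => Nk.head (Sum.inl e) = Sum.inr w) = ∅ := by
      rw [Finset.filter_eq_empty_iff]
      intro e _
      rw [hheadl]
      exact fun h => nomatch h
    rw [hi, Finset.sum_empty, zero_add]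
    exact Finset.sum_congr (Finset.filter_congr (fun e _ => by
      rw [hheadr]
      exact ⟨fun h => Sum.inr_injective h, fun h => by rw [h]⟩)) (fun _ _ => rfl)
  have hsplitj : Nj.Eout ∪ Nj.Eint = insert e2 ((Nj.Eout.erase e2) ∪ Nj.Eint) := by
    ext e
    rw [Finset.mem_insert, Finset.mem_union, Finset.mem_union, Finset.mem_erase]
    constructor
    · rintro (h | h)
      · by_cases hc : e = e2
        · exact Or.inl hc
        · exact Or.inr (Or.inl ⟨hc, h⟩)
      · exact Or.inr (Or.inr h)
    · rintro (rfl | (⟨_, h⟩ | h))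
      · exact Or.inl he2
      · exact Or.inl h
      · exact Or.inr h
  have hRj : ∀ (F : Ei ⊕ Ej → ℝ) (w : Vj),
      ∑ x ∈ (Nk.Eout ∪ Nk.Eint).filter (fun x => Nk.tail x = Sum.inr w), F x
      = ∑ e ∈ (Nj.Eout ∪ Nj.Eint).filter (fun e => Nj.tail e = w),
          (if e = e2 then F (Sum.inl e1) else F (Sum.inr e)) := by
    intro F w
    have hcore : ∑ x ∈ ((Ni.Eout ∪ Ni.Eint).image Sum.inl
          ∪ ((Nj.Eout.erase e2) ∪ Nj.Eint).image Sum.inr).filter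
            (fun x => Nk.tail x = Sum.inr w), F x
        = ∑ e ∈ ((Nj.Eout.erase e2) ∪ Nj.Eint).filter (fun e => Nj.tail e = w),
            (if e = e2 then F (Sum.inl e1) else F (Sum.inr e)) := by
      rw [sum_filter_inl_inr]
      have hi : (Ni.Eout ∪ Ni.Eint).filter (fun e => Nk.tail (Sum.inl e) = Sum.inr w) = ∅ := by
        rw [Finset.filter_eq_empty_iff]
        intro e he
        rw [htaill e (hine1 e he)]
        exact fun h => nomatch h
      have hfe : ((Nj.Eout.erase e2) ∪ Nj.Eint).filter
            (fun e => Nk.tail (Sum.inr e) = Sum.inr w)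
          = ((Nj.Eout.erase e2) ∪ Nj.Eint).filter (fun e => Nj.tail e = w) :=
        Finset.filter_congr (fun e he => by
          rw [htailr]
          exact ⟨fun h => Sum.inr_injective h, fun h => by rw [h]⟩)
      rw [hi, Finset.sum_empty, zero_add, hfe]
      refine Finset.sum_congr rfl (fun e he => ?_)
      rw [if_neg (hjne2 e (Finset.mem_filter.1 he).1)]
    rw [hOK, Finset.filter_insert, hsplitj, Finset.filter_insert]
    by_cases hw : Nj.tail e2 = w
    · rw [if_pos (by rw [hsplice, hw]), if_pos hw, Finset.sum_insert, Finset.sum_insert]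
      · rw [hcore, if_pos rfl]
      · intro hc
        exact hjne2 e2 (Finset.mem_filter.1 hc).1 rfl
      · intro hc
        have := (Finset.mem_filter.1 hc).1
        rw [mem_inl_union, Finset.mem_union] at this
        rcases this with h | h
        · exact he1out h
        · exact he1int h
    · rw [if_neg (by rw [hsplice]; exact fun hc => hw (Sum.inr_injective hc)), if_neg hw]
      exact hcore
  have hAin : ∀ e, e ∈ A2 → e ≠ e2 := fun e he hc => he2in (hc ▸ hA2 he)
  apply le_antisymm
  · -- upper bound
    apply Nk.maxFromTo_le
    intro F hFf hFs
    set fi : Ei → ℝ := fun e => F (Sum.inl e) with hfi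
    set fj : Ej → ℝ := fun e => if e = e2 then F (Sum.inl e1) else F (Sum.inr e) with hfj
    have hfjnn : ∀ e, 0 ≤ fj e := by
      intro e
      rw [hfj]
      dsimp only
      split <;> exact hFf.1 _
    have hfif : Ni.Feasible fi := by
      refine ⟨fun e => hFf.1 _, fun e => ?_, fun w => ?_⟩
      · have := hFf.2.1 (Sum.inl e)
        rwa [hcapl e] at this
      · have h1 := hFf.2.2 (Sum.inl w)
        rw [hLi F w, hRi F w] at h1
        exact h1
    have hfjf : Nj.Feasible fj := by
      refine ⟨hfjnn, fun e => ?_, fun w => ?_⟩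
      · rw [hfj]
        dsimp only
        by_cases he : e = e2
        · rw [if_pos he, he]
          have := hFf.2.1 (Sum.inl e1)
          rw [hcapl e1, hcap12] at this
          exact this
        · rw [if_neg he]
          have := hFf.2.1 (Sum.inr e)
          rwa [hcapr e] at this
      · have h1 := hFf.2.2 (Sum.inr w)
        rw [hLj F w, hRj F w] at h1
        have hL : ∑ e ∈ (Nj.Ein ∪ Nj.Eint).filter (fun e => Nj.head e = w), F (Sum.inr e)
            = ∑ e ∈ (Nj.Ein ∪ Nj.Eint).filter (fun e => Nj.head e = w), fj e := by
          refine Finset.sum_congr rfl (fun e he => ?_)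
          have hne : e ≠ e2 := by
            intro hc
            subst hc
            rcases Finset.mem_union.1 (Finset.mem_filter.1 he).1 with h | h
            · exact he2in h
            · exact he2int h
          rw [hfj]
          dsimp only
          rw [if_neg hne]
        rw [hL] at h1
        exact h1
    have hfis : Ni.Sup (insert e1 A1) B1 fi := by
      intro e he
      apply hFs
      rcases Finset.mem_union.1 he with h | h
      · rw [Finset.mem_sdiff] at h
        refine Finset.mem_union_left _ (Finset.mem_sdiff.2 ⟨?_, ?_⟩)
        · rw [hEin, mem_inl_union, Finset.mem_erase]
          exact ⟨fun hc => h.2 (hc ▸ Finset.mem_insert_self e1 A1), h.1⟩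
        · rw [hA, mem_inl_union]
          exact fun hc => h.2 (Finset.mem_insert_of_mem hc)
      · rw [Finset.mem_sdiff] at h
        refine Finset.mem_union_right _ (Finset.mem_sdiff.2 ⟨?_, ?_⟩)
        · rw [hEout, mem_inl_union]
          exact h.1
        · rw [hB, mem_inl_union]
          exact h.2
    have hfjs : Nj.Sup A2 (insert e2 B2) fj := by
      intro e he
      have hne : e ≠ e2 := by
        intro hc
        subst hc
        rcases Finset.mem_union.1 he with h | h
        · exact he2in (Finset.mem_sdiff.1 h).1
        · exact (Finset.mem_sdiff.1 h).2 (Finset.mem_insert_self _ _)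
      rw [hfj]
      dsimp only
      rw [if_neg hne]
      apply hFs
      rcases Finset.mem_union.1 he with h | h
      · rw [Finset.mem_sdiff] at h
        refine Finset.mem_union_left _ (Finset.mem_sdiff.2 ⟨?_, ?_⟩)
        · rw [hEin, mem_inr_union]
          exact h.1
        · rw [hA, mem_inr_union]
          exact h.2
      · rw [Finset.mem_sdiff] at h
        refine Finset.mem_union_right _ (Finset.mem_sdiff.2 ⟨?_, ?_⟩)
        · rw [hEout, mem_inr_union, Finset.mem_erase]
          exact ⟨hne, h.1⟩
        · rw [hB, mem_inr_union]
          exact fun hc => h.2 (Finset.mem_insert_of_mem hc)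
    have hI1 : fi e1 + ∑ e ∈ A1, fi e ≤ Mi' := by
      have := Ni.le_maxFromTo hfif hfis
      rwa [Finset.sum_insert he1A1] at this
    have hI2 : ∑ e ∈ A1, fi e ≤ Mi := Ni.drop_input hcoveri he1 he1A1 hA1' hfif hfis
    have hI3 : ∑ e ∈ A2, fj e ≤ Mj' := Nj.le_maxFromTo hfjf hfjs
    have hrevfeas : Nj.rev.Feasible fj := (Nj.rev_feasible fj).2 hfjf
    have hrevsup : Nj.rev.Sup (insert e2 B2) A2 fj := (Nj.rev_sup A2 (insert e2 B2) fj).2 hfjs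
    have hI4 : ∑ e ∈ B2, fj e ≤ Mj := by
      have h1 := Nj.rev.drop_input (Nj.rev_cover hcoverj) (e1 := e2) (A := B2) (B := A2)
        he2 he2B2 hB2' hrevfeas hrevsup
      rwa [Nj.rev_max hA2 hB2'] at h1
    have hI5 : ∑ e ∈ A2, fj e = fj e2 + ∑ e ∈ B2, fj e := by
      have h1 := Nj.value_in_out hfjf hfjs hA2 (Finset.insert_subset he2 hB2')
      rwa [Finset.sum_insert he2B2] at h1
    have ht : fi e1 = fj e2 := by
      rw [hfi, hfj]
      dsimp only
      rw [if_pos rfl]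
    have hval : ∑ x ∈ A, F x = ∑ e ∈ A1, fi e + ∑ e ∈ A2, fj e := by
      rw [hA, sum_inl_inr]
      congr 1
      refine Finset.sum_congr rfl (fun e he => ?_)
      rw [hfj]
      dsimp only
      rw [if_neg (hAin e he)]
    rw [hval]
    rcases le_total (Mi' - Mi) (Mj' - Mj) with hmin | hmin
    · rw [min_eq_left hmin]
      linarith
    · rw [min_eq_right hmin]
      linarith
  · -- lower bound
    set m := min (Mi' - Mi) (Mj' - Mj) with hm
    have hm0 : 0 ≤ m := le_min (by linarith) (by linarith)
    obtain ⟨fi, hfif, hfis, hfiA, hfie1⟩ :=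
      Ni.exists_slack hcoveri he1 he1A1 hA1' hB1 hm0 (min_le_left _ _)
    have hmj : m ≤ Nj.rev.maxFromTo (insert e2 B2) A2 - Nj.rev.maxFromTo B2 A2 := by
      rw [Nj.rev_max hA2 hB2', Nj.rev_max hA2 (Finset.insert_subset he2 hB2')]
      exact min_le_right _ _
    obtain ⟨fj, hfjf', hfjs', hfjB, hfje2⟩ :=
      Nj.rev.exists_slack (Nj.rev_cover hcoverj) (e1 := e2) (A := B2) (B := A2)
        he2 he2B2 hB2' hA2 hm0 hmj
    have hfjf : Nj.Feasible fj := (Nj.rev_feasible fj).1 hfjf'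
    have hfjs : Nj.Sup A2 (insert e2 B2) fj := (Nj.rev_sup A2 (insert e2 B2) fj).1 hfjs'
    rw [Nj.rev_max hA2 hB2'] at hfjB
    have hfjA2 : ∑ e ∈ A2, fj e = m + Mj := by
      have h1 := Nj.value_in_out hfjf hfjs hA2 (Finset.insert_subset he2 hB2')
      rw [Finset.sum_insert he2B2, hfje2, hfjB] at h1
      exact h1
    set F : Ei ⊕ Ej → ℝ := Sum.elim fi (fun e => if e = e2 then 0 else fj e) with hF
    have hFinl : ∀ e, F (Sum.inl e) = fi e := fun e => rfl
    have hFinr : ∀ e, e ≠ e2 → F (Sum.inr e) = fj e := by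
      intro e he
      rw [hF]
      dsimp only [Sum.elim_inr]
      rw [if_neg he]
    have hpatch : ∀ e, (if e = e2 then F (Sum.inl e1) else F (Sum.inr e)) = fj e := by
      intro e
      by_cases he : e = e2
      · subst he
        rw [if_pos rfl, hFinl, hfie1, hfje2]
      · rw [if_neg he, hFinr e he]
    have hFf : Nk.Feasible F := by
      refine ⟨fun x => ?_, fun x => ?_, fun v => ?_⟩
      · rcases x with e | e
        · exact hfif.1 e
        · rw [hF]
          dsimp only [Sum.elim_inr]
          split
          · exact le_refl 0
          · exact hfjf.1 e
      · rcases x with e | e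
        · rw [hFinl, hcapl]
          exact hfif.2.1 e
        · rw [hF, hcapr]
          dsimp only [Sum.elim_inr]
          split
          · exact Nj.cap_nonneg e
          · exact hfjf.2.1 e
      · rcases v with w | w
        · rw [hLi F w, hRi F w]
          exact hfif.2.2 w
        · rw [hLj F w, hRj F w]
          have hL : ∑ e ∈ (Nj.Ein ∪ Nj.Eint).filter (fun e => Nj.head e = w), F (Sum.inr e)
              = ∑ e ∈ (Nj.Ein ∪ Nj.Eint).filter (fun e => Nj.head e = w), fj e := by
            refine Finset.sum_congr rfl (fun e he => ?_)
            apply hFinr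
            intro hc
            subst hc
            rcases Finset.mem_union.1 (Finset.mem_filter.1 he).1 with h | h
            · exact he2in h
            · exact he2int h
          rw [hL, Finset.sum_congr rfl (fun e _ => hpatch e)]
          exact hfjf.2.2 w
    have hFs : Nk.Sup A B F := by
      intro x hx
      rcases x with e | e
      · rw [hFinl]
        apply hfis
        rcases Finset.mem_union.1 hx with h | h
        · rw [Finset.mem_sdiff, hEin, mem_inl_union, Finset.mem_erase, hA, mem_inl_union] at h
          refine Finset.mem_union_left _ (Finset.mem_sdiff.2 ⟨h.1.2, ?_⟩)
          intro hc
          rcases Finset.mem_insert.1 hc with hc1 | hc1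
          · exact h.1.1 hc1
          · exact h.2 hc1
        · rw [Finset.mem_sdiff, hEout, mem_inl_union, hB, mem_inl_union] at h
          exact Finset.mem_union_right _ (Finset.mem_sdiff.2 h)
      · rcases Finset.mem_union.1 hx with h | h
        · rw [Finset.mem_sdiff, hEin, mem_inr_union, hA, mem_inr_union] at h
          rw [hFinr e (fun hc => he2in (hc ▸ h.1))]
          exact hfjs e (Finset.mem_union_left _ (Finset.mem_sdiff.2 h))
        · rw [Finset.mem_sdiff, hEout, mem_inr_union, Finset.mem_erase, hB, mem_inr_union] at h
          rw [hFinr e h.1.1]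
          apply hfjs
          refine Finset.mem_union_right _ (Finset.mem_sdiff.2 ⟨h.1.2, ?_⟩)
          intro hc
          rcases Finset.mem_insert.1 hc with hc1 | hc1
          · exact h.1.1 hc1
          · exact h.2 hc1
    have hFv : ∑ x ∈ A, F x = Mi + Mj + m := by
      rw [hA, sum_inl_inr]
      have h1 : ∑ e ∈ A1, F (Sum.inl e) = Mi := hfiA
      have h2 : ∑ e ∈ A2, F (Sum.inr e) = m + Mj := by
        rw [Finset.sum_congr rfl (fun e he => hFinr e (hAin e he))]
        exact hfjA2
      rw [h1, h2]
      ring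
    have h1 := Nk.le_maxFromTo hFf hFs
    rw [hFv] at h1
    exact h1

end FlowNetwork
end

section
/- Let N_i = (G_i, c_i) be a flow network, let e1 be an input edge and e2 an output edge of G_i with c_i(e1) = c_i(e2) and head_{G_i}(e1) ≠ tail_{G_i}(e2), and let N_k be the network obtained by splicing e1 and e2 into a single new internal edge e (same vertex set; input edges Ein_i \ {e1}; output edges Eout_i \ {e2}; internal edges E#_i ∪ {e}, where tail(e) = tail_{G_i}(e2), head(e) = head_{G_i}(e1), c(e) = c_i(e1), and all other heads, tails, and capacities are inherited). Then for all A ⊆ Ein_i \ {e1} and B ⊆ Eout_i \ {e2}: maxFromTo_{N_k}(A, B) = maxFromTo_{N_i}(A, B) + min{ maxFromTo_{N_i}(A ∪ {e1}, B) − maxFromTo_{N_i}(A, B), maxFromTo_{N_i}(A, B ∪ {e2}) − maxFromTo_{N_i}(A, B) }. -/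
open Finset

namespace FlowNetwork

variable {V E : Type} [Fintype V] [Fintype E] [DecidableEq V] [DecidableEq E]

section Duality

variable (N : FlowNetwork V E)

/-- The feasible region of the problem `maxFromTo N A B`. -/
def FeasSet (N : FlowNetwork V E) (A B : Finset E) : Set (E → ℝ) :=
  {f | N.Feasible f ∧ ∀ e ∈ (N.Ein \ A) ∪ (N.Eout \ B), f e = 0}

lemma zero_mem_feasSet (A B : Finset E) : (fun _ => (0:ℝ)) ∈ N.FeasSet A B :=
  ⟨⟨fun _ => le_refl 0, fun e => N.cap_nonneg e, fun v => by simp⟩, fun e _ => rfl⟩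

lemma isCompact_feasSet (A B : Finset E) : IsCompact (N.FeasSet A B) := by
  have hsub : N.FeasSet A B ⊆ Set.pi Set.univ fun e => Set.Icc (0:ℝ) (N.cap e) := by
    intro f hf e _; exact ⟨hf.1.1 e, hf.1.2.1 e⟩
  have hK : IsCompact (Set.pi Set.univ fun e => Set.Icc (0:ℝ) (N.cap e)) :=
    isCompact_univ_pi fun e => isCompact_Icc
  refine hK.of_isClosed_subset ?_ hsub
  have : N.FeasSet A B =
      ((⋂ e, {f : E → ℝ | 0 ≤ f e}) ∩ (⋂ e, {f : E → ℝ | f e ≤ N.cap e}) ∩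
      (⋂ v, {f : E → ℝ | ∑ e ∈ (N.Ein ∪ N.Eint).filter (fun e => N.head e = v), f e =
          ∑ e ∈ (N.Eout ∪ N.Eint).filter (fun e => N.tail e = v), f e})) ∩
      (⋂ e ∈ (N.Ein \ A) ∪ (N.Eout \ B), {f : E → ℝ | f e = 0}) := by
    ext f
    simp only [FeasSet, Feasible, Set.mem_setOf_eq, Set.mem_inter_iff, Set.mem_iInter]
    tauto
  rw [this]
  refine IsClosed.inter (IsClosed.inter (IsClosed.inter ?_ ?_) ?_) ?_
  · exact isClosed_iInter fun e => isClosed_le continuous_const (continuous_apply e)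
  · exact isClosed_iInter fun e => isClosed_le (continuous_apply e) continuous_const
  · exact isClosed_iInter fun v => isClosed_eq
      (continuous_finset_sum _ fun e _ => continuous_apply e)
      (continuous_finset_sum _ fun e _ => continuous_apply e)
  · exact isClosed_iInter fun e => isClosed_iInter fun _ =>
      isClosed_eq (continuous_apply e) continuous_const

lemma exists_max (A B : Finset E) :
    ∃ f ∈ N.FeasSet A B, N.maxFromTo A B = ∑ e ∈ A, f e ∧
      ∀ g ∈ N.FeasSet A B, ∑ e ∈ A, g e ≤ ∑ e ∈ A, f e := by
  obtain ⟨f, hf, hmax⟩ := (N.isCompact_feasSet A B).exists_isMaxOn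
    ⟨_, N.zero_mem_feasSet A B⟩
    ((continuous_finset_sum A fun e _ => continuous_apply e).continuousOn)
  have hub : ∀ g ∈ N.FeasSet A B, ∑ e ∈ A, g e ≤ ∑ e ∈ A, f e := fun g hg =>
    isMaxOn_iff.mp hmax g hg
  refine ⟨f, hf, ?_, hub⟩
  have hset : {x : ℝ | ∃ g : E → ℝ, N.Feasible g ∧
      (∀ e ∈ (N.Ein \ A) ∪ (N.Eout \ B), g e = 0) ∧ x = ∑ e ∈ A, g e}
      = (fun g : E → ℝ => ∑ e ∈ A, g e) '' N.FeasSet A B := by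
    ext x
    constructor
    · rintro ⟨g, h1, h2, rfl⟩; exact ⟨g, ⟨h1, h2⟩, rfl⟩
    · rintro ⟨g, ⟨h1, h2⟩, rfl⟩; exact ⟨g, h1, h2, rfl⟩
  rw [maxFromTo, hset]
  refine IsGreatest.csSup_eq ⟨⟨f, hf, rfl⟩, ?_⟩
  rintro x ⟨g, hg, rfl⟩
  exact hub g hg

/-- The capacity of a "cut" given by a vertex set `S` (source side). -/
def cut (N : FlowNetwork V E) (A B : Finset E) (S : Finset V) : ℝ :=
  ∑ e ∈ A.filter (fun e => N.head e ∉ S), N.cap e +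
  ∑ e ∈ B.filter (fun e => N.tail e ∈ S), N.cap e +
  ∑ e ∈ N.Eint.filter (fun e => N.tail e ∈ S ∧ N.head e ∉ S), N.cap e

lemma sum_fiber (f : E → ℝ) (T : Finset E) (h : E → V) (S : Finset V) :
    ∑ v ∈ S, ∑ e ∈ T.filter (fun e => h e = v), f e =
      ∑ e ∈ T.filter (fun e => h e ∈ S), f e := by
  simp_rw [Finset.sum_filter]
  rw [Finset.sum_comm]
  refine Finset.sum_congr rfl fun e _ => ?_
  simp [Finset.sum_ite_eq S (h e) (fun _ => f e)]

lemma conservation_set (f : E → ℝ) (hf : N.Feasible f) (S : Finset V) :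
    ∑ e ∈ (N.Ein ∪ N.Eint).filter (fun e => N.head e ∈ S), f e =
      ∑ e ∈ (N.Eout ∪ N.Eint).filter (fun e => N.tail e ∈ S), f e := by
  rw [← sum_fiber f _ N.head S, ← sum_fiber f _ N.tail S]
  exact Finset.sum_congr rfl fun v _ => hf.2.2 v

lemma key_identity (A B : Finset E) (hA : A ⊆ N.Ein) (hB : B ⊆ N.Eout)
    (f : E → ℝ) (hf : N.Feasible f)
    (hv : ∀ e ∈ (N.Ein \ A) ∪ (N.Eout \ B), f e = 0) (S : Finset V) :
    ∑ e ∈ A.filter (fun e => N.head e ∈ S), f e +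
      ∑ e ∈ N.Eint.filter (fun e => N.head e ∈ S ∧ N.tail e ∉ S), f e =
    ∑ e ∈ B.filter (fun e => N.tail e ∈ S), f e +
      ∑ e ∈ N.Eint.filter (fun e => N.tail e ∈ S ∧ N.head e ∉ S), f e := by
  have h0 := N.conservation_set f hf S
  rw [Finset.filter_union, Finset.filter_union,
    Finset.sum_union (Finset.disjoint_filter_filter N.disj_in_int),
    Finset.sum_union (Finset.disjoint_filter_filter N.disj_out_int)] at h0
  have hEinA : ∑ e ∈ N.Ein.filter (fun e => N.head e ∈ S), f e =
      ∑ e ∈ A.filter (fun e => N.head e ∈ S), f e := by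
    refine (Finset.sum_subset (Finset.filter_subset_filter _ hA) ?_).symm
    intro e he hne
    refine hv e (Finset.mem_union_left _ (Finset.mem_sdiff.mpr ⟨(Finset.mem_filter.mp he).1, ?_⟩))
    intro hea
    exact hne (Finset.mem_filter.mpr ⟨hea, (Finset.mem_filter.mp he).2⟩)
  have hEoutB : ∑ e ∈ N.Eout.filter (fun e => N.tail e ∈ S), f e =
      ∑ e ∈ B.filter (fun e => N.tail e ∈ S), f e := by
    refine (Finset.sum_subset (Finset.filter_subset_filter _ hB) ?_).symm
    intro e he hne
    refine hv e (Finset.mem_union_right _ (Finset.mem_sdiff.mpr ⟨(Finset.mem_filter.mp he).1, ?_⟩))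
    intro heb
    exact hne (Finset.mem_filter.mpr ⟨heb, (Finset.mem_filter.mp he).2⟩)
  have hsplit1 : ∑ e ∈ N.Eint.filter (fun e => N.head e ∈ S), f e =
      ∑ e ∈ N.Eint.filter (fun e => N.head e ∈ S ∧ N.tail e ∈ S), f e +
      ∑ e ∈ N.Eint.filter (fun e => N.head e ∈ S ∧ N.tail e ∉ S), f e := by
    rw [← Finset.sum_filter_add_sum_filter_not
      (N.Eint.filter (fun e => N.head e ∈ S)) (fun e => N.tail e ∈ S),
      Finset.filter_filter, Finset.filter_filter]
  have hsplit2 : ∑ e ∈ N.Eint.filter (fun e => N.tail e ∈ S), f e =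
      ∑ e ∈ N.Eint.filter (fun e => N.head e ∈ S ∧ N.tail e ∈ S), f e +
      ∑ e ∈ N.Eint.filter (fun e => N.tail e ∈ S ∧ N.head e ∉ S), f e := by
    rw [← Finset.sum_filter_add_sum_filter_not
      (N.Eint.filter (fun e => N.tail e ∈ S)) (fun e => N.head e ∈ S),
      Finset.filter_filter, Finset.filter_filter]
    congr 1
    exact Finset.sum_congr (Finset.filter_congr fun e _ => by tauto) fun _ _ => rfl
  linarith

lemma flow_le_cut (A B : Finset E) (hA : A ⊆ N.Ein) (hB : B ⊆ N.Eout)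
    (f : E → ℝ) (hf : N.Feasible f)
    (hv : ∀ e ∈ (N.Ein \ A) ∪ (N.Eout \ B), f e = 0) (S : Finset V) :
    ∑ e ∈ A, f e ≤ N.cut A B S := by
  have key := N.key_identity A B hA hB f hf hv S
  have hsplitA : ∑ e ∈ A, f e = ∑ e ∈ A.filter (fun e => N.head e ∈ S), f e +
      ∑ e ∈ A.filter (fun e => N.head e ∉ S), f e :=
    (Finset.sum_filter_add_sum_filter_not A _ f).symm
  have h1 : ∑ e ∈ A.filter (fun e => N.head e ∉ S), f e ≤
      ∑ e ∈ A.filter (fun e => N.head e ∉ S), N.cap e :=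
    Finset.sum_le_sum fun e _ => hf.2.1 e
  have h2 : ∑ e ∈ B.filter (fun e => N.tail e ∈ S), f e ≤
      ∑ e ∈ B.filter (fun e => N.tail e ∈ S), N.cap e :=
    Finset.sum_le_sum fun e _ => hf.2.1 e
  have h3 : ∑ e ∈ N.Eint.filter (fun e => N.tail e ∈ S ∧ N.head e ∉ S), f e ≤
      ∑ e ∈ N.Eint.filter (fun e => N.tail e ∈ S ∧ N.head e ∉ S), N.cap e :=
    Finset.sum_le_sum fun e _ => hf.2.1 e
  have h4 : (0:ℝ) ≤ ∑ e ∈ N.Eint.filter (fun e => N.head e ∈ S ∧ N.tail e ∉ S), f e :=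
    Finset.sum_nonneg fun e _ => hf.1 e
  unfold cut
  linarith

lemma maxFromTo_le_cut (A B : Finset E) (hA : A ⊆ N.Ein) (hB : B ⊆ N.Eout)
    (S : Finset V) : N.maxFromTo A B ≤ N.cut A B S := by
  refine csSup_le ⟨0, fun _ => 0, (N.zero_mem_feasSet A B).1, (N.zero_mem_feasSet A B).2, by simp⟩ ?_
  rintro x ⟨f, hf, hv, rfl⟩
  exact N.flow_le_cut A B hA hB f hf hv S

set_option linter.unusedSectionVars false

/-- Along a residual path there is an augmenting "unit pseudo-flow" on internal edges. -/
lemma exists_aug (N : FlowNetwork V E) (f : E → ℝ) {u v : V}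
    (h : Relation.ReflTransGen (fun v w =>
      (∃ e ∈ N.Eint, N.tail e = v ∧ N.head e = w ∧ f e < N.cap e) ∨
      (∃ e ∈ N.Eint, N.tail e = w ∧ N.head e = v ∧ 0 < f e)) u v) :
    ∃ g : E → ℝ, (∀ e, g e ≠ 0 → e ∈ N.Eint) ∧ (∀ e, 0 < g e → f e < N.cap e) ∧
      (∀ e, g e < 0 → 0 < f e) ∧
      ∀ w : V, ∑ e ∈ N.Eint.filter (fun e => N.head e = w), g e -
          ∑ e ∈ N.Eint.filter (fun e => N.tail e = w), g e =
        (if v = w then (1:ℝ) else 0) - (if u = w then (1:ℝ) else 0) := by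
  induction h with
  | refl => exact ⟨fun _ => 0, by simp, by simp, by simp, fun w => by simp⟩
  | @tail b c hab hbc ih =>
    obtain ⟨g, hsupp, hpos, hneg, hdiv⟩ := ih
    have hchi : ∀ (e0 : E), e0 ∈ N.Eint → ∀ (p : E → V) (w : V),
        ∑ e ∈ N.Eint.filter (fun e => p e = w), (if e = e0 then (1:ℝ) else 0) =
          if p e0 = w then (1:ℝ) else 0 := by
      intro e0 he0 p w
      rw [Finset.sum_ite_eq' (N.Eint.filter (fun e => p e = w)) e0 (fun _ => (1:ℝ))]
      by_cases hw : p e0 = w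
      · simp [Finset.mem_filter, he0, hw]
      · simp [Finset.mem_filter, hw]
    rcases hbc with ⟨e0, he0, ht0, hh0, hcap0⟩ | ⟨e0, he0, ht0, hh0, hpos0⟩
    · refine ⟨fun e => g e + (if e = e0 then 1 else 0), ?_, ?_, ?_, ?_⟩
      · intro e hne
        by_cases he : e = e0
        · exact he ▸ he0
        · exact hsupp e (by simpa [he] using hne)
      · intro e hgt
        by_cases he : e = e0
        · exact he ▸ hcap0
        · exact hpos e (by simpa [he] using hgt)
      · intro e hlt
        by_cases he : e = e0
        · subst he; exact hneg e (by linarith [show g e + 1 < 0 by simpa using hlt])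
        · exact hneg e (by simpa [he] using hlt)
      · intro w
        rw [Finset.sum_add_distrib, Finset.sum_add_distrib, hchi e0 he0 N.head w,
          hchi e0 he0 N.tail w, ht0, hh0]
        have := hdiv w
        by_cases h1 : c = w <;> by_cases h2 : b = w <;> by_cases h3 : u = w <;>
          simp [h1, h2, h3] at this ⊢ <;> linarith
    · refine ⟨fun e => g e - (if e = e0 then 1 else 0), ?_, ?_, ?_, ?_⟩
      · intro e hne
        by_cases he : e = e0
        · exact he ▸ he0
        · exact hsupp e (by simpa [he] using hne)
      · intro e hgt
        by_cases he : e = e0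
        · subst he; exact hpos e (by linarith [show (0:ℝ) < g e - 1 by simpa using hgt])
        · exact hpos e (by simpa [he] using hgt)
      · intro e hlt
        by_cases he : e = e0
        · exact he ▸ hpos0
        · exact hneg e (by simpa [he] using hlt)
      · intro w
        rw [Finset.sum_sub_distrib, Finset.sum_sub_distrib, hchi e0 he0 N.head w,
          hchi e0 he0 N.tail w, ht0, hh0]
        have := hdiv w
        by_cases h1 : c = w <;> by_cases h2 : b = w <;> by_cases h3 : u = w <;>
          simp [h1, h2, h3] at this ⊢ <;> linarith


/-- Strong duality: the maximum flow value is achieved by some cut. -/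
lemma exists_cut_eq (A B : Finset E) (hA : A ⊆ N.Ein) (hB : B ⊆ N.Eout) :
    ∃ S : Finset V, N.maxFromTo A B = N.cut A B S := by
  classical
  obtain ⟨f, ⟨hf, hv⟩, hval, hmax⟩ := N.exists_max A B
  set stepRel : V → V → Prop := fun v w =>
    (∃ e ∈ N.Eint, N.tail e = v ∧ N.head e = w ∧ f e < N.cap e) ∨
    (∃ e ∈ N.Eint, N.tail e = w ∧ N.head e = v ∧ 0 < f e) with hstepRel
  set Reach : V → Prop := fun v => ∃ e ∈ A, f e < N.cap e ∧
    Relation.ReflTransGen stepRel (N.head e) v with hReach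
  set S : Finset V := Finset.univ.filter Reach with hSdef
  have hmemS : ∀ v, v ∈ S ↔ Reach v := fun v => by simp [hSdef]
  have hreach_base : ∀ e ∈ A, f e < N.cap e → N.head e ∈ S := by
    intro e he hlt
    exact (hmemS _).mpr ⟨e, he, hlt, Relation.ReflTransGen.refl⟩
  have hfwd : ∀ e ∈ N.Eint, N.tail e ∈ S → f e < N.cap e → N.head e ∈ S := by
    intro e he hS' hlt
    obtain ⟨e0, he0, hlt0, hpath⟩ := (hmemS _).mp hS'
    exact (hmemS _).mpr ⟨e0, he0, hlt0, hpath.tail (Or.inl ⟨e, he, rfl, rfl, hlt⟩)⟩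
  have hbwd : ∀ e ∈ N.Eint, N.head e ∈ S → 0 < f e → N.tail e ∈ S := by
    intro e he hS' hpos
    obtain ⟨e0, he0, hlt0, hpath⟩ := (hmemS _).mp hS'
    exact (hmemS _).mpr ⟨e0, he0, hlt0, hpath.tail (Or.inr ⟨e, he, rfl, rfl, hpos⟩)⟩
  have hBsat : ∀ e ∈ B, N.tail e ∈ S → f e = N.cap e := by
    intro e' he' htS
    by_contra hnecap
    have hlt' : f e' < N.cap e' := lt_of_le_of_ne (hf.2.1 e') hnecap
    obtain ⟨e0, he0, hlt0, hpath⟩ := (hmemS _).mp htS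
    obtain ⟨g, hsupp, hgpos, hgneg, hdiv⟩ := N.exists_aug f hpath
    have he0in : e0 ∈ N.Ein := hA he0
    have he'out : e' ∈ N.Eout := hB he'
    have he0nint : e0 ∉ N.Eint := Finset.disjoint_left.mp N.disj_in_int he0in
    have he'nint : e' ∉ N.Eint := Finset.disjoint_left.mp N.disj_out_int he'out
    have he'nin : e' ∉ N.Ein := fun h => Finset.disjoint_left.mp N.disj_in_out h he'out
    have he0nout : e0 ∉ N.Eout := fun h => Finset.disjoint_left.mp N.disj_in_out he0in h
    have hne00 : e0 ≠ e' := fun h => he'nin (h ▸ he0in)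
    have hge0 : g e0 = 0 := by by_contra h; exact he0nint (hsupp e0 h)
    have hge' : g e' = 0 := by by_contra h; exact he'nint (hsupp e' h)
    set hfun : E → ℝ := fun e => g e + (if e = e0 then 1 else 0) + (if e = e' then 1 else 0)
      with hhfun
    have hfun0 : hfun e0 = 1 := by simp [hhfun, hge0, hne00]
    have hfun' : hfun e' = 1 := by simp [hhfun, hge', Ne.symm hne00]
    have hfunelse : ∀ e, e ≠ e0 → e ≠ e' → hfun e = g e := by
      intro e h1 h2; simp [hhfun, h1, h2]
    have hfpos : ∀ e, 0 < hfun e → f e < N.cap e := by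
      intro e hgt
      by_cases h1 : e = e0
      · exact h1 ▸ hlt0
      · by_cases h2 : e = e'
        · exact h2 ▸ hlt'
        · exact hgpos e (by rwa [hfunelse e h1 h2] at hgt)
    have hfneg : ∀ e, hfun e < 0 → 0 < f e := by
      intro e hltz
      by_cases h1 : e = e0
      · rw [h1, hfun0] at hltz; norm_num at hltz
      · by_cases h2 : e = e'
        · rw [h2, hfun'] at hltz; norm_num at hltz
        · exact hgneg e (by rwa [hfunelse e h1 h2] at hltz)
    have hEne : (Finset.univ : Finset E).Nonempty := ⟨e', Finset.mem_univ e'⟩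
    set ε : ℝ := Finset.univ.inf' hEne (fun e =>
      if 0 < hfun e then (N.cap e - f e) / hfun e
      else if hfun e < 0 then f e / (-hfun e) else 1) with hε
    have hεpos : 0 < ε := by
      rw [hε, Finset.lt_inf'_iff]
      intro e _
      split_ifs with h1 h2
      · exact div_pos (sub_pos.mpr (hfpos e h1)) h1
      · exact div_pos (hfneg e h2) (neg_pos.mpr h2)
      · norm_num
    have hεle : ∀ e, ε ≤ if 0 < hfun e then (N.cap e - f e) / hfun e
        else if hfun e < 0 then f e / (-hfun e) else 1 :=
      fun e => Finset.inf'_le _ (Finset.mem_univ e)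
    have hub : ∀ e, ε * hfun e ≤ N.cap e - f e := by
      intro e
      rcases lt_trichotomy (hfun e) 0 with h|h|h
      · have h1 : ε * hfun e < 0 := mul_neg_of_pos_of_neg hεpos h
        have h2 : 0 ≤ N.cap e - f e := sub_nonneg.mpr (hf.2.1 e)
        linarith
      · rw [h, mul_zero]; linarith [sub_nonneg.mpr (hf.2.1 e)]
      · have h1 := hεle e
        rw [if_pos h] at h1
        calc ε * hfun e ≤ ((N.cap e - f e) / hfun e) * hfun e :=
              mul_le_mul_of_nonneg_right h1 (le_of_lt h)
          _ = N.cap e - f e := div_mul_cancel₀ _ (ne_of_gt h)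
    have hlb : ∀ e, 0 ≤ f e + ε * hfun e := by
      intro e
      rcases lt_trichotomy (hfun e) 0 with h|h|h
      · have h1 := hεle e
        rw [if_neg (by linarith), if_pos h] at h1
        have h2 : ε * (-hfun e) ≤ f e :=
          calc ε * (-hfun e) ≤ (f e / (-hfun e)) * (-hfun e) :=
                mul_le_mul_of_nonneg_right h1 (by linarith)
            _ = f e := div_mul_cancel₀ _ (by linarith)
        linarith
      · rw [h, mul_zero]; linarith [hf.1 e]
      · nlinarith [hf.1 e, mul_pos hεpos h]
    set f' : E → ℝ := fun e => f e + ε * hfun e with hf'def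
    have hsum_g : ∀ (T : Finset E) (p : E → V) (w : V), N.Eint ⊆ T →
        ∑ e ∈ T.filter (fun e => p e = w), g e =
          ∑ e ∈ N.Eint.filter (fun e => p e = w), g e := by
      intro T p w hsub
      refine (Finset.sum_subset (Finset.filter_subset_filter _ hsub) ?_).symm
      intro e he hne
      by_contra hgne
      exact hne (Finset.mem_filter.mpr ⟨hsupp e hgne, (Finset.mem_filter.mp he).2⟩)
    have hsum_chi : ∀ (e1 : E) (T : Finset E) (p : E → V) (w : V),
        ∑ e ∈ T.filter (fun e => p e = w), (if e = e1 then (1:ℝ) else 0) =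
          if e1 ∈ T ∧ p e1 = w then (1:ℝ) else 0 := by
      intro e1 T p w
      rw [Finset.sum_ite_eq' (T.filter (fun e => p e = w)) e1 (fun _ => (1:ℝ))]
      by_cases h : e1 ∈ T ∧ p e1 = w
      · simp [Finset.mem_filter, h.1, h.2]
      · rw [if_neg, if_neg h]
        intro hmem
        exact h ⟨(Finset.mem_filter.mp hmem).1, (Finset.mem_filter.mp hmem).2⟩
    have hconsh : ∀ w, ∑ e ∈ (N.Ein ∪ N.Eint).filter (fun e => N.head e = w), hfun e =
        ∑ e ∈ (N.Eout ∪ N.Eint).filter (fun e => N.tail e = w), hfun e := by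
      intro w
      simp only [hhfun]
      rw [Finset.sum_add_distrib, Finset.sum_add_distrib, Finset.sum_add_distrib,
        Finset.sum_add_distrib, hsum_g _ _ _ Finset.subset_union_right,
        hsum_g _ _ _ Finset.subset_union_right,
        hsum_chi e0 _ _ _, hsum_chi e0 _ _ _, hsum_chi e' _ _ _, hsum_chi e' _ _ _]
      have m1 : e0 ∈ N.Ein ∪ N.Eint := Finset.mem_union_left _ he0in
      have m2 : e0 ∉ N.Eout ∪ N.Eint := by
        intro h; rcases Finset.mem_union.mp h with h|h
        exacts [he0nout h, he0nint h]
      have m3 : e' ∉ N.Ein ∪ N.Eint := by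
        intro h; rcases Finset.mem_union.mp h with h|h
        exacts [he'nin h, he'nint h]
      have m4 : e' ∈ N.Eout ∪ N.Eint := Finset.mem_union_left _ he'out
      have hd := hdiv w
      by_cases c1 : N.head e0 = w <;> by_cases c2 : N.tail e' = w <;>
        simp [m1, m2, m3, m4, c1, c2] at hd ⊢ <;> linarith
    have hfeas' : N.Feasible f' := by
      refine ⟨fun e => hlb e, fun e => by have := hub e; simp only [hf'def]; linarith,
        fun w => ?_⟩
      simp only [hf'def]
      rw [Finset.sum_add_distrib, Finset.sum_add_distrib, ← Finset.mul_sum, ← Finset.mul_sum,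
        hf.2.2 w, hconsh w]
    have hv' : ∀ e ∈ (N.Ein \ A) ∪ (N.Eout \ B), f' e = 0 := by
      intro e he
      have hfz := hv e he
      have hgz : g e = 0 := by
        by_contra h
        have hint := hsupp e h
        rcases Finset.mem_union.mp he with h' | h'
        · exact Finset.disjoint_left.mp N.disj_in_int (Finset.mem_sdiff.mp h').1 hint
        · exact Finset.disjoint_left.mp N.disj_out_int (Finset.mem_sdiff.mp h').1 hint
      have hne1 : e ≠ e0 := by
        rintro rfl
        rcases Finset.mem_union.mp he with h' | h'
        · exact (Finset.mem_sdiff.mp h').2 he0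
        · exact he0nout (Finset.mem_sdiff.mp h').1
      have hne2 : e ≠ e' := by
        rintro rfl
        rcases Finset.mem_union.mp he with h' | h'
        · exact he'nin (Finset.mem_sdiff.mp h').1
        · exact (Finset.mem_sdiff.mp h').2 he'
      simp [hf'def, hfz, hfunelse e hne1 hne2, hgz]
    have hsumhA : ∑ e ∈ A, hfun e = 1 := by
      simp only [hhfun]
      rw [Finset.sum_add_distrib, Finset.sum_add_distrib]
      have hg0 : ∑ e ∈ A, g e = 0 := Finset.sum_eq_zero fun e he => by
        by_contra h
        exact Finset.disjoint_left.mp N.disj_in_int (hA he) (hsupp e h)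
      have hc0 : ∑ e ∈ A, (if e = e0 then (1:ℝ) else 0) = 1 := by
        rw [Finset.sum_ite_eq' A e0 fun _ => (1:ℝ), if_pos he0]
      have hc' : ∑ e ∈ A, (if e = e' then (1:ℝ) else 0) = 0 := by
        rw [Finset.sum_ite_eq' A e' fun _ => (1:ℝ), if_neg]
        intro h
        exact he'nin (hA h)
      rw [hg0, hc0, hc']; ring
    have hsumA : ∑ e ∈ A, f' e = ∑ e ∈ A, f e + ε := by
      simp only [hf'def]
      rw [Finset.sum_add_distrib, ← Finset.mul_sum, hsumhA, mul_one]
    have hcontra := hmax f' ⟨hfeas', hv'⟩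
    rw [hsumA] at hcontra
    linarith
  -- now compute the cut value
  have hAsat : ∀ e ∈ A, N.head e ∉ S → f e = N.cap e := by
    intro e he hns
    by_contra h
    exact hns (hreach_base e he (lt_of_le_of_ne (hf.2.1 e) h))
  have hOutSat : ∀ e ∈ N.Eint, N.tail e ∈ S → N.head e ∉ S → f e = N.cap e := by
    intro e he h1 h2
    by_contra h
    exact h2 (hfwd e he h1 (lt_of_le_of_ne (hf.2.1 e) h))
  have hInZero : ∀ e ∈ N.Eint, N.head e ∈ S → N.tail e ∉ S → f e = 0 := by
    intro e he h1 h2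
    by_contra h
    exact h2 (hbwd e he h1 (lt_of_le_of_ne (hf.1 e) (Ne.symm h)))
  have key := N.key_identity A B hA hB f hf hv S
  have h1 : ∑ e ∈ B.filter (fun e => N.tail e ∈ S), f e =
      ∑ e ∈ B.filter (fun e => N.tail e ∈ S), N.cap e :=
    Finset.sum_congr rfl fun e he =>
      hBsat e (Finset.mem_filter.mp he).1 (Finset.mem_filter.mp he).2
  have h2 : ∑ e ∈ N.Eint.filter (fun e => N.tail e ∈ S ∧ N.head e ∉ S), f e =
      ∑ e ∈ N.Eint.filter (fun e => N.tail e ∈ S ∧ N.head e ∉ S), N.cap e :=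
    Finset.sum_congr rfl fun e he =>
      hOutSat e (Finset.mem_filter.mp he).1 (Finset.mem_filter.mp he).2.1
        (Finset.mem_filter.mp he).2.2
  have h3 : ∑ e ∈ N.Eint.filter (fun e => N.head e ∈ S ∧ N.tail e ∉ S), f e = 0 :=
    Finset.sum_eq_zero fun e he =>
      hInZero e (Finset.mem_filter.mp he).1 (Finset.mem_filter.mp he).2.1
        (Finset.mem_filter.mp he).2.2
  have h4 : ∑ e ∈ A.filter (fun e => N.head e ∉ S), f e =
      ∑ e ∈ A.filter (fun e => N.head e ∉ S), N.cap e :=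
    Finset.sum_congr rfl fun e he =>
      hAsat e (Finset.mem_filter.mp he).1 (Finset.mem_filter.mp he).2
  have h5 : ∑ e ∈ A, f e = ∑ e ∈ A.filter (fun e => N.head e ∈ S), f e +
      ∑ e ∈ A.filter (fun e => N.head e ∉ S), f e :=
    (Finset.sum_filter_add_sum_filter_not A _ f).symm
  refine ⟨S, ?_⟩
  rw [hval]
  unfold cut
  linarith

end Duality

/-- splicing within one network, Case 2 of the induction:
`Nk` is obtained from `Ni` by splicing its input edge `e1` and its output edge `e2`
into a single internal edge `e` (encoded as the edge `e1` itself, with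
`tail e = tail_{Ni} e2` and `head e = head_{Ni} e1`; the leftover half `e2` is junk,
belonging to none of the three edge classes of `Nk`).
Then `maxFromTo` of the spliced network is given by the stated formula. -/
theorem stmt13 (Ni : FlowNetwork V E)
    (hcoveri : Ni.Ein ∪ Ni.Eout ∪ Ni.Eint = Finset.univ)
    (e1 e2 : E) (he1 : e1 ∈ Ni.Ein) (he2 : e2 ∈ Ni.Eout)
    (hcap12 : Ni.cap e1 = Ni.cap e2) (hne : Ni.head e1 ≠ Ni.tail e2)
    (Nk : FlowNetwork V E)
    (hEin : Nk.Ein = Ni.Ein.erase e1)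
    (hEout : Nk.Eout = Ni.Eout.erase e2)
    (hEint : Nk.Eint = insert e1 Ni.Eint)
    (hhead : ∀ e : E, Nk.head e = Ni.head e)
    (htail : ∀ e : E, e ≠ e1 → Nk.tail e = Ni.tail e)
    (hsplice : Nk.tail e1 = Ni.tail e2)
    (hcap : ∀ e : E, Nk.cap e = Ni.cap e)
    (A B : Finset E) (hA : A ⊆ Ni.Ein.erase e1) (hB : B ⊆ Ni.Eout.erase e2) :
    Nk.maxFromTo A B =
      Ni.maxFromTo A B +
        min (Ni.maxFromTo (insert e1 A) B - Ni.maxFromTo A B)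
            (Ni.maxFromTo A (insert e2 B) - Ni.maxFromTo A B) := by
  have he1A : e1 ∉ A := fun h => (Finset.mem_erase.mp (hA h)).1 rfl
  have he2B : e2 ∉ B := fun h => (Finset.mem_erase.mp (hB h)).1 rfl
  have he1int : e1 ∉ Ni.Eint := Finset.disjoint_left.mp Ni.disj_in_int he1
  have hAin : A ⊆ Ni.Ein := hA.trans (Finset.erase_subset _ _)
  have hBout : B ⊆ Ni.Eout := hB.trans (Finset.erase_subset _ _)
  have hAk : A ⊆ Nk.Ein := hEin ▸ hA
  have hBk : B ⊆ Nk.Eout := hEout ▸ hB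
  have hA1 : insert e1 A ⊆ Ni.Ein := Finset.insert_subset he1 hAin
  have hB2 : insert e2 B ⊆ Ni.Eout := Finset.insert_subset he2 hBout
  have hnee : ∀ e ∈ B, e ≠ e1 := fun e he h =>
    Finset.disjoint_left.mp Ni.disj_in_out he1 (h ▸ hBout he)
  have hneint : ∀ e ∈ Ni.Eint, e ≠ e1 := fun e he h => he1int (h ▸ he)
  -- translation of the cut of Nk
  have hbase : ∀ S : Finset V, Nk.cut A B S =
      Ni.cut A B S + (if Ni.tail e2 ∈ S ∧ Ni.head e1 ∉ S then Ni.cap e1 else 0) := by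
    intro S
    unfold cut
    have hAterm : ∑ e ∈ A.filter (fun e => Nk.head e ∉ S), Nk.cap e =
        ∑ e ∈ A.filter (fun e => Ni.head e ∉ S), Ni.cap e := by
      rw [Finset.filter_congr fun e _ => by rw [hhead e]]
      exact Finset.sum_congr rfl fun e _ => hcap e
    have hBterm : ∑ e ∈ B.filter (fun e => Nk.tail e ∈ S), Nk.cap e =
        ∑ e ∈ B.filter (fun e => Ni.tail e ∈ S), Ni.cap e := by
      rw [Finset.filter_congr fun e he => by rw [htail e (hnee e he)]]
      exact Finset.sum_congr rfl fun e _ => hcap e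
    have hIterm : ∑ e ∈ Nk.Eint.filter (fun e => Nk.tail e ∈ S ∧ Nk.head e ∉ S), Nk.cap e =
        ∑ e ∈ Ni.Eint.filter (fun e => Ni.tail e ∈ S ∧ Ni.head e ∉ S), Ni.cap e +
        (if Ni.tail e2 ∈ S ∧ Ni.head e1 ∉ S then Ni.cap e1 else 0) := by
      rw [hEint, Finset.filter_insert]
      have hfil : Ni.Eint.filter (fun e => Nk.tail e ∈ S ∧ Nk.head e ∉ S) =
          Ni.Eint.filter (fun e => Ni.tail e ∈ S ∧ Ni.head e ∉ S) :=
        Finset.filter_congr fun e he => by rw [htail e (hneint e he), hhead e]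
      have hpred : (Nk.tail e1 ∈ S ∧ Nk.head e1 ∉ S) ↔
          (Ni.tail e2 ∈ S ∧ Ni.head e1 ∉ S) := by rw [hsplice, hhead]
      by_cases hc : Ni.tail e2 ∈ S ∧ Ni.head e1 ∉ S
      · rw [if_pos (hpred.mpr hc), if_pos hc, Finset.sum_insert (by
          rw [hfil]
          intro hmem
          exact he1int (Finset.mem_filter.mp hmem).1), hfil]
        rw [hcap e1]
        have : ∑ e ∈ Ni.Eint.filter (fun e => Ni.tail e ∈ S ∧ Ni.head e ∉ S), Nk.cap e =
            ∑ e ∈ Ni.Eint.filter (fun e => Ni.tail e ∈ S ∧ Ni.head e ∉ S), Ni.cap e :=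
          Finset.sum_congr rfl fun e _ => hcap e
        rw [this]; ring
      · rw [if_neg (fun h => hc (hpred.mp h)), if_neg hc, hfil, add_zero]
        exact Finset.sum_congr rfl fun e _ => hcap e
    rw [hAterm, hBterm, hIterm]; ring
  have hcut1 : ∀ S : Finset V, Ni.cut (insert e1 A) B S =
      Ni.cut A B S + (if Ni.head e1 ∉ S then Ni.cap e1 else 0) := by
    intro S
    unfold cut
    rw [Finset.filter_insert]
    by_cases h : Ni.head e1 ∉ S
    · rw [if_pos h, Finset.sum_insert (fun hm => he1A (Finset.mem_filter.mp hm).1), if_pos h]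
      ring
    · rw [if_neg h, if_neg h]; ring
  have hcut2 : ∀ S : Finset V, Ni.cut A (insert e2 B) S =
      Ni.cut A B S + (if Ni.tail e2 ∈ S then Ni.cap e1 else 0) := by
    intro S
    unfold cut
    rw [Finset.filter_insert]
    by_cases h : Ni.tail e2 ∈ S
    · rw [if_pos h, Finset.sum_insert (fun hm => he2B (Finset.mem_filter.mp hm).1), if_pos h,
        hcap12]
      ring
    · rw [if_neg h, if_neg h]; ring
  -- upper bounds
  have hle1 : Nk.maxFromTo A B ≤ Ni.maxFromTo (insert e1 A) B := by
    obtain ⟨S1, hS1⟩ := Ni.exists_cut_eq (insert e1 A) B hA1 hBout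
    have hw := Nk.maxFromTo_le_cut A B hAk hBk S1
    have hcomp : Nk.cut A B S1 ≤ Ni.cut (insert e1 A) B S1 := by
      rw [hbase S1, hcut1 S1]
      have : (if Ni.tail e2 ∈ S1 ∧ Ni.head e1 ∉ S1 then Ni.cap e1 else 0) ≤
          (if Ni.head e1 ∉ S1 then Ni.cap e1 else 0) := by
        split_ifs with h1 h2 <;>
          first
            | exact le_rfl
            | exact Ni.cap_nonneg e1
            | exact absurd h2 h1.2
            | exact absurd h1.2 h2
      linarith
    rw [hS1]; linarith
  have hle2 : Nk.maxFromTo A B ≤ Ni.maxFromTo A (insert e2 B) := by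
    obtain ⟨S2, hS2⟩ := Ni.exists_cut_eq A (insert e2 B) hAin hB2
    have hw := Nk.maxFromTo_le_cut A B hAk hBk S2
    have hcomp : Nk.cut A B S2 ≤ Ni.cut A (insert e2 B) S2 := by
      rw [hbase S2, hcut2 S2]
      have : (if Ni.tail e2 ∈ S2 ∧ Ni.head e1 ∉ S2 then Ni.cap e1 else 0) ≤
          (if Ni.tail e2 ∈ S2 then Ni.cap e1 else 0) := by
        split_ifs with h1 h2 <;>
          first
            | exact le_rfl
            | exact Ni.cap_nonneg e1
            | exact absurd h2 h1.1
            | exact absurd h1.1 h2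
      linarith
    rw [hS2]; linarith
  -- lower bound
  have hge : min (Ni.maxFromTo (insert e1 A) B) (Ni.maxFromTo A (insert e2 B)) ≤
      Nk.maxFromTo A B := by
    obtain ⟨Sk, hSk⟩ := Nk.exists_cut_eq A B hAk hBk
    have h1 := Ni.maxFromTo_le_cut (insert e1 A) B hA1 hBout Sk
    have h2 := Ni.maxFromTo_le_cut A (insert e2 B) hAin hB2 Sk
    have hcomp : min (Ni.cut (insert e1 A) B Sk) (Ni.cut A (insert e2 B) Sk) ≤
        Nk.cut A B Sk := by
      rw [hbase Sk, hcut1 Sk, hcut2 Sk]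
      by_cases hP : Ni.tail e2 ∈ Sk
      · by_cases hQ : Ni.head e1 ∉ Sk
        · rw [if_pos (⟨hP, hQ⟩ : Ni.tail e2 ∈ Sk ∧ Ni.head e1 ∉ Sk), if_pos hQ]
          exact inf_le_left
        · rw [if_neg (fun h : Ni.tail e2 ∈ Sk ∧ Ni.head e1 ∉ Sk => hQ h.2), if_neg hQ]
          exact inf_le_left
      · by_cases hQ : Ni.head e1 ∉ Sk
        · rw [if_neg (fun h : Ni.tail e2 ∈ Sk ∧ Ni.head e1 ∉ Sk => hP h.1), if_pos hQ,
            if_neg hP]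
          exact inf_le_right
        · rw [if_neg (fun h : Ni.tail e2 ∈ Sk ∧ Ni.head e1 ∉ Sk => hP h.1), if_neg hQ,
            if_neg hP]
          exact inf_le_left
    calc min (Ni.maxFromTo (insert e1 A) B) (Ni.maxFromTo A (insert e2 B)) ≤
          min (Ni.cut (insert e1 A) B Sk) (Ni.cut A (insert e2 B) Sk) := min_le_min h1 h2
      _ ≤ Nk.cut A B Sk := hcomp
      _ = Nk.maxFromTo A B := hSk.symm
  have heq : Nk.maxFromTo A B =
      min (Ni.maxFromTo (insert e1 A) B) (Ni.maxFromTo A (insert e2 B)) :=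
    le_antisymm (le_min hle1 hle2) hge
  rw [heq, min_sub_sub_right]
  ring

end FlowNetwork
end
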